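/- For every real number s ≥ 0 there exists a constant C_s > 0 such that for all trigonometric polynomials u₁, u₂ on T², ‖u₁·u₂‖_{X^{s,0}} ≤ C_s ‖u₁‖_{X^{s,1/3}} ‖u₂‖_{X^{s,1/3}}. -/

import Mathlib

open scoped BigOperators

noncomputable section

/-- Dispersion relation of the linearized 1D periodic Dysthe equation. -/
def P (n : ℤ) : ℤ := n ^ 3 - 2 * n ^ 2 + 8 * n

/-- Japanese bracket `⟨k⟩ = 1 + |k|` of an integer, as a real number. -/
def jap (k : ℤ) : ℝ := 1 + |(k : ℝ)|

/-- A trigonometric polynomial on `T²`, given by its finitely supported family of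
space-time Fourier coefficients `f̂(n,τ)`. -/
abbrev TrigPoly := ℤ × ℤ →₀ ℂ

/-- Pointwise realization `f(x,t) = Σ_{(n,τ)} f̂(n,τ) e^{i(nx+τt)}` of a
trigonometric polynomial on `T²`. -/
def toFun (f : TrigPoly) (x t : ℝ) : ℂ :=
  ∑ p ∈ f.support, f p * Complex.exp (Complex.I * (((p.1 : ℝ) * x + (p.2 : ℝ) * t : ℝ) : ℂ))

/-- `L^p` norm on the torus `T² = [0,2π]_x × [0,2π]_t`. -/
def LpNorm (p : ℝ) (u : ℝ → ℝ → ℂ) : ℝ :=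
  (∫ x in (0:ℝ)..(2 * Real.pi), ∫ t in (0:ℝ)..(2 * Real.pi), ‖u x t‖ ^ p) ^ (1 / p)

/-- The Bourgain `X^{s,b}` norm associated to the dispersion relation `P`. -/
def Xnorm (s b : ℝ) (f : TrigPoly) : ℝ :=
  (∑ p ∈ f.support, jap p.1 ^ (2 * s) * jap (p.2 - P p.1) ^ (2 * b) * ‖f p‖ ^ 2) ^ ((1:ℝ) / 2)

/-- The Bourgain `Y^{s,b}` norm associated to the dispersion relation `P`. -/
def Ynorm (s b : ℝ) (f : TrigPoly) : ℝ :=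
  (∑ n ∈ f.support.image Prod.fst, jap n ^ (2 * s) *
      (∑ τ ∈ f.support.image Prod.snd, jap (τ - P n) ^ b * ‖f (n, τ)‖) ^ 2) ^ ((1:ℝ) / 2)

/-- The `Z^{s,b}` norm: `‖f‖_{Z^{s,b}} = ‖f‖_{X^{s,b}} + ‖f‖_{Y^{s,b-1/2}}`. -/
def Znorm (s b : ℝ) (f : TrigPoly) : ℝ :=
  Xnorm s b f + Ynorm s (b - 1 / 2) f

/-- Product of trigonometric polynomials: convolution of the coefficients, which
corresponds to the pointwise product of the realized functions. -/
def cmul (f g : TrigPoly) : TrigPoly :=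
  f.sum fun a fa => g.sum fun b gb => Finsupp.single (a + b) (fa * gb)

/-- Orthogonal projection `ℙ` onto the zero-spatial-mean subspace:
it kills all coefficients `f̂(0,τ)`. -/
def Pproj (f : TrigPoly) : TrigPoly :=
  Finsupp.filter (fun p : ℤ × ℤ => p.1 ≠ 0) f

/-- Pointwise complex conjugate at the level of Fourier coefficients:
`(conj f)̂(n,τ) = conj (f̂(-n,-τ))`. -/
def conjC (f : TrigPoly) : TrigPoly :=
  Finsupp.equivMapDomain (Equiv.neg (ℤ × ℤ)) (Finsupp.mapRange (starRingEnd ℂ) (map_zero _) f)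

namespace S16
open Finset

def sig (q : ℤ × ℤ) : ℤ := q.2 - P q.1
def lev (q : ℤ × ℤ) : ℕ := Nat.log 2 (1 + (sig q).natAbs)
def slev (n : ℤ) : ℕ := Nat.log 2 (1 + n.natAbs)

lemma jap_cast (k : ℤ) : jap k = ((1 + k.natAbs : ℕ) : ℝ) := by
  simp only [jap]
  push_cast [Nat.cast_natAbs]
  simp [Int.cast_abs]

lemma one_le_jap (k : ℤ) : 1 ≤ jap k := by
  have : 0 ≤ |(k:ℝ)| := abs_nonneg _
  simp only [jap]; linarith

lemma jap_pos (k : ℤ) : 0 < jap k := lt_of_lt_of_le one_pos (one_le_jap k)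

lemma jap_add_le (a b : ℤ) : jap (a + b) ≤ jap a * jap b := by
  have ha : 0 ≤ |(a:ℝ)| := abs_nonneg _
  have hb : 0 ≤ |(b:ℝ)| := abs_nonneg _
  have h : |((a:ℝ) + b)| ≤ |(a:ℝ)| + |(b:ℝ)| := abs_add_le _ _
  simp only [jap]
  push_cast
  nlinarith [mul_nonneg ha hb]

-- level bounds
lemma le_of_slev (n : ℤ) : (2:ℝ)^(slev n : ℝ) ≤ jap n := by
  rw [jap_cast]
  have h := Nat.pow_log_le_self 2 (show 1 + n.natAbs ≠ 0 by omega)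
  rw [Real.rpow_natCast]
  exact_mod_cast h

lemma slev_lt (n : ℤ) : jap n < (2:ℝ)^((slev n : ℝ) + 1) := by
  rw [jap_cast]
  have h := Nat.lt_pow_succ_log_self (show 1 < 2 by norm_num) (1 + n.natAbs)
  have h2 : ((slev n : ℝ) + 1) = ((slev n + 1 : ℕ) : ℝ) := by push_cast; ring
  rw [h2, Real.rpow_natCast]
  exact_mod_cast h

lemma le_of_lev (q : ℤ × ℤ) : (2:ℝ)^(lev q : ℝ) ≤ jap (sig q) := le_of_slev (n := sig q)

lemma lev_lt (q : ℤ × ℤ) : jap (sig q) < (2:ℝ)^((lev q : ℝ) + 1) := slev_lt (n := sig q)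

-- integer version
lemma natAbs_le_of_slev (n : ℤ) (ℓ : ℕ) (h : slev n = ℓ) :
    2^ℓ ≤ 1 + n.natAbs ∧ 1 + n.natAbs ≤ 2^(ℓ+1) - 1 := by
  constructor
  · rw [← h]; exact Nat.pow_log_le_self 2 (by omega)
  · have h2 := Nat.lt_pow_succ_log_self (show 1 < 2 by norm_num) (1 + n.natAbs)
    have h3 : Nat.log 2 (1 + n.natAbs) = ℓ := h
    rw [h3] at h2
    omega

lemma natAbs_sig_le (q : ℤ × ℤ) (j : ℕ) (h : lev q = j) : (sig q).natAbs ≤ 2^(j+1) - 2 := by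
  have h2 := Nat.lt_pow_succ_log_self (show 1 < 2 by norm_num) (1 + (sig q).natAbs)
  have h3 : Nat.log 2 (1 + (sig q).natAbs) = j := h
  rw [h3] at h2
  have : 2 ≤ 2^(j+1) := by
    calc 2 = 2^1 := rfl
    _ ≤ 2^(j+1) := Nat.pow_le_pow_right (by norm_num) (by omega)
  omega

-- resonance identity
lemma resonance (p q : ℤ × ℤ) :
    sig q + sig (p - q) = sig p + (3 * p.1 - 4) * (q.1 * (p.1 - q.1)) := by
  simp only [sig, P, Prod.fst_sub, Prod.snd_sub]
  ring

lemma gain (n : ℤ) : (2:ℝ)^((slev n : ℝ) - 1) ≤ |((3*n - 4 : ℤ) : ℝ)| := by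
  have key : 1 + n.natAbs ≤ 2 * (3*n-4).natAbs := by
    rcases le_or_gt n 0 with h | h
    · have h1 : (3*n-4).natAbs = (4 - 3*n).toNat := by
        rw [Int.natAbs_eq_iff]; right; omega
      have h2 : n.natAbs = (-n).toNat := by rw [Int.natAbs_eq_iff]; right; omega
      omega
    · rcases eq_or_lt_of_le (show 1 ≤ n by omega) with h1 | h1
      · have h2 : n = 1 := h1.symm
        subst h2; decide
      · have h3 : n ≥ 2 := by omega
        have ha : (3*n-4).natAbs = (3*n-4).toNat := by rw [Int.natAbs_eq_iff]; left; omega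
        have hb : n.natAbs = n.toNat := by rw [Int.natAbs_eq_iff]; left; omega
        omega
  have h2 : (2:ℝ)^(slev n : ℝ) ≤ jap n := le_of_slev n
  have h3 : jap n = ((1 + n.natAbs : ℕ):ℝ) := jap_cast n
  have h4 : ((1 + n.natAbs : ℕ):ℝ) ≤ 2 * |((3*n-4 : ℤ):ℝ)| := by
    have : |((3*n-4 : ℤ):ℝ)| = (((3*n-4).natAbs : ℕ) : ℝ) := by
      rw [Nat.cast_natAbs]; push_cast [Int.cast_abs]; ring
    rw [this]
    exact_mod_cast key
  have h5 : (2:ℝ)^((slev n:ℝ) - 1) = (2:ℝ)^(slev n : ℝ) / 2 := by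
    rw [Real.rpow_sub (by norm_num)]; norm_num
  rw [h5]
  linarith

lemma toNat_cast_real (x : ℤ) (h : 0 ≤ x) : ((x.toNat : ℕ) : ℝ) = (x:ℝ) := by
  have : ((x.toNat : ℕ) : ℤ) = x := Int.toNat_of_nonneg h
  exact_mod_cast congrArg (Int.cast : ℤ → ℝ) this

-- counting integers whose square lies in an interval, nonneg case
lemma sq_count_nonneg (c δ : ℝ) (hδ : 0 ≤ δ) (F : Finset ℤ)
    (hpos : ∀ x ∈ F, 0 ≤ x)
    (hF : ∀ x ∈ F, c ≤ ((x:ℝ))^2 ∧ ((x:ℝ))^2 ≤ c + δ) :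
    (F.card : ℝ) ≤ 1 + Real.sqrt δ := by
  rcases F.eq_empty_or_nonempty with h | h
  · simp [h]; positivity
  · set m := F.min' h with hm
    have hmF : m ∈ F := F.min'_mem h
    have hsub : F ⊆ Finset.Icc m (m + ⌊Real.sqrt δ⌋) := by
      intro x hx
      rw [Finset.mem_Icc]
      have h1 : m ≤ x := F.min'_le x hx
      refine ⟨h1, ?_⟩
      have hx2 := hF x hx
      have hm2 := hF m hmF
      have h0 : (0:ℝ) ≤ ((x - m : ℤ):ℝ) := by
        push_cast
        have : (m:ℝ) ≤ (x:ℝ) := by exact_mod_cast h1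
        linarith
      have hxm : ((x - m : ℤ) : ℝ)^2 ≤ δ := by
        have hmpos : (0:ℝ) ≤ (m:ℝ) := by exact_mod_cast hpos m hmF
        have h0' : (0:ℝ) ≤ (x:ℝ) - (m:ℝ) := by push_cast at h0; linarith
        push_cast
        nlinarith [hx2.2, hm2.1, mul_nonneg hmpos h0']
      have hle : ((x - m : ℤ):ℝ) ≤ Real.sqrt δ := by
        have := Real.sqrt_le_sqrt hxm
        rwa [Real.sqrt_sq h0] at this
      have := Int.le_floor.2 hle
      omega
    have hc := Finset.card_le_card hsub
    have hcard : (Finset.Icc m (m + ⌊Real.sqrt δ⌋)).card = (⌊Real.sqrt δ⌋ + 1).toNat := by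
      rw [Int.card_Icc]; congr 1; ring
    have hfl : (0:ℤ) ≤ ⌊Real.sqrt δ⌋ := Int.floor_nonneg.2 (Real.sqrt_nonneg δ)
    have h2 : (F.card : ℝ) ≤ (((⌊Real.sqrt δ⌋ + 1).toNat : ℕ) : ℝ) := by
      rw [← hcard]; exact_mod_cast hc
    rw [toNat_cast_real _ (by omega)] at h2
    have := Int.floor_le (Real.sqrt δ)
    push_cast at h2
    linarith

lemma sq_count (c δ : ℝ) (hδ : 0 ≤ δ) (F : Finset ℤ)
    (hF : ∀ x ∈ F, c ≤ ((x:ℝ))^2 ∧ ((x:ℝ))^2 ≤ c + δ) :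
    (F.card : ℝ) ≤ 2 * (1 + Real.sqrt δ) := by
  classical
  set F1 := F.filter (fun x => 0 ≤ x) with hF1
  set F2 := F.filter (fun x => ¬ (0 ≤ x)) with hF2
  have hsplit : F1.card + F2.card = F.card := Finset.card_filter_add_card_filter_not _
  have h1 : (F1.card : ℝ) ≤ 1 + Real.sqrt δ := by
    apply sq_count_nonneg c δ hδ F1
    · intro x hx; exact (Finset.mem_filter.1 hx).2
    · intro x hx; exact hF x (Finset.mem_filter.1 hx).1
  have h2 : (F2.card : ℝ) ≤ 1 + Real.sqrt δ := by
    have hinj : (F2.image (fun x => -x)).card = F2.card := by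
      apply Finset.card_image_of_injOn
      intro a _ b _ hab
      simpa using hab
    rw [← hinj]
    apply sq_count_nonneg c δ hδ
    · intro x hx
      obtain ⟨y, hy, rfl⟩ := Finset.mem_image.1 hx
      have : ¬ (0 ≤ y) := (Finset.mem_filter.1 hy).2
      omega
    · intro x hx
      obtain ⟨y, hy, rfl⟩ := Finset.mem_image.1 hx
      have := hF y (Finset.mem_filter.1 hy).1
      push_cast
      push_cast at this
      constructor <;> nlinarith [this.1, this.2]
  have h3 : (F.card : ℝ) = F1.card + F2.card := by exact_mod_cast hsplit.symm
  linarith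

-- count of a fiber with second coordinates confined to an interval
lemma card_snd_Icc (F : Finset (ℤ × ℤ)) (n₁ c : ℤ) (R : ℤ) (hR : 0 ≤ R)
    (hfst : ∀ q ∈ F, q.1 = n₁) (h : ∀ q ∈ F, |q.2 - c| ≤ R) :
    (F.card : ℝ) ≤ 2 * (R:ℝ) + 1 := by
  classical
  have hinj : (F.image Prod.snd).card = F.card := by
    apply Finset.card_image_of_injOn
    intro a ha b hb hab
    have h1 := hfst a ha; have h2 := hfst b hb
    ext
    · rw [h1, h2]
    · exact hab
  rw [← hinj]
  have hsub : F.image Prod.snd ⊆ Finset.Icc (c - R) (c + R) := by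
    intro t ht
    obtain ⟨q, hq, rfl⟩ := Finset.mem_image.1 ht
    have h2 := h q hq
    rw [abs_le] at h2
    rw [Finset.mem_Icc]
    omega
  have hc := Finset.card_le_card hsub
  have hcard : (Finset.Icc (c-R) (c+R)).card = (2*R+1).toNat := by
    rw [Int.card_Icc]; congr 1; ring
  have h4 : ((F.image Prod.snd).card : ℝ) ≤ (((2*R+1).toNat : ℕ) : ℝ) := by
    rw [← hcard]; exact_mod_cast hc
  rw [toNat_cast_real _ (by omega)] at h4
  push_cast at h4
  linarith

-- cardinality of a shell in ℤ
lemma card_shell (ℓ : ℕ) (F : Finset ℤ)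
    (hF : ∀ n ∈ F, Nat.log 2 (1 + n.natAbs) = ℓ) :
    (F.card : ℝ) ≤ 2^((ℓ:ℝ)+1) := by
  classical
  have key : ∀ n ∈ F, (2^ℓ - 1 : ℤ) ≤ |n| ∧ |n| ≤ 2^(ℓ+1) - 2 := by
    intro n hn
    have h1 : 2^ℓ ≤ 1 + n.natAbs := by
      rw [← hF n hn]; exact Nat.pow_log_le_self 2 (by omega)
    have h2 := Nat.lt_pow_succ_log_self (show 1 < 2 by norm_num) (1 + n.natAbs)
    rw [hF n hn] at h2
    have habs : |n| = (n.natAbs : ℤ) := Int.abs_eq_natAbs n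
    constructor
    · rw [habs]
      have : (2:ℤ)^ℓ = ((2^ℓ : ℕ) : ℤ) := by push_cast; ring
      omega
    · rw [habs]
      have : (2:ℤ)^(ℓ+1) = ((2^(ℓ+1) : ℕ) : ℤ) := by push_cast; ring
      omega
  set a : ℤ := 2^ℓ - 1
  set b : ℤ := 2^(ℓ+1) - 2
  have hsub : F ⊆ Finset.Icc (-b) (-a) ∪ Finset.Icc a b := by
    intro n hn
    have := key n hn
    rcases le_or_gt 0 n with h | h
    · apply Finset.mem_union_right
      rw [Finset.mem_Icc]
      rw [abs_of_nonneg h] at this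
      omega
    · apply Finset.mem_union_left
      rw [Finset.mem_Icc]
      rw [abs_of_neg h] at this
      omega
  have hc := Finset.card_le_card hsub
  have hcu := Finset.card_union_le (Finset.Icc (-b) (-a)) (Finset.Icc a b)
  have h1 : (Finset.Icc (-b) (-a)).card = (b - a + 1).toNat := by rw [Int.card_Icc]; congr 1; ring
  have h2 : (Finset.Icc a b).card = (b - a + 1).toNat := by rw [Int.card_Icc]; congr 1; ring
  have hba : b - a + 1 = 2^ℓ := by
    simp only [a, b]
    have : (2:ℤ)^(ℓ+1) = 2 * 2^ℓ := by ring
    omega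
  have h5 : F.card ≤ 2 * (2^ℓ : ℤ).toNat := by
    calc F.card ≤ _ := hc
    _ ≤ _ := hcu
    _ ≤ 2 * (2^ℓ : ℤ).toNat := by rw [h1, h2, hba]; omega
  calc (F.card : ℝ) ≤ 2 * (((2^ℓ : ℤ).toNat : ℕ) : ℝ) := by exact_mod_cast h5
    _ = 2 * 2^(ℓ:ℝ) := by
        rw [toNat_cast_real _ (by positivity)]
        push_cast
        rw [Real.rpow_natCast]
    _ = 2^((ℓ:ℝ)+1) := by rw [Real.rpow_add (by norm_num)]; norm_num; ring

-- Cauchy–Schwarz with cardinality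
lemma sq_sum_le_card {α : Type*} (s : Finset α) (f : α → ℝ) :
    (∑ i ∈ s, f i)^2 ≤ s.card * ∑ i ∈ s, (f i)^2 := by
  have := Finset.sum_mul_sq_le_sq_mul_sq s (fun _ => (1:ℝ)) f
  simpa using this

-- two-term Minkowski
lemma minkowski_two {α : Type*} (t : Finset α) (f g : α → ℝ) :
    Real.sqrt (∑ a ∈ t, (f a + g a)^2) ≤
      Real.sqrt (∑ a ∈ t, (f a)^2) + Real.sqrt (∑ a ∈ t, (g a)^2) := by
  have hA : (0:ℝ) ≤ ∑ a ∈ t, (f a)^2 := by positivity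
  have hB : (0:ℝ) ≤ ∑ a ∈ t, (g a)^2 := by positivity
  have hcs : ∑ a ∈ t, f a * g a ≤ Real.sqrt (∑ a ∈ t, (f a)^2) * Real.sqrt (∑ a ∈ t, (g a)^2) := by
    have h1 := Finset.sum_mul_sq_le_sq_mul_sq t f g
    have h2 : ∑ a ∈ t, f a * g a ≤ |∑ a ∈ t, f a * g a| := le_abs_self _
    have h3 : |∑ a ∈ t, f a * g a| = Real.sqrt ((∑ a ∈ t, f a * g a)^2) := (Real.sqrt_sq_eq_abs _).symm
    rw [← Real.sqrt_mul hA]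
    calc ∑ a ∈ t, f a * g a ≤ Real.sqrt ((∑ a ∈ t, f a * g a)^2) := by rw [← h3]; exact h2
      _ ≤ Real.sqrt _ := Real.sqrt_le_sqrt h1
  have he : ∑ a ∈ t, (f a + g a)^2
      = (∑ a ∈ t, (f a)^2) + ∑ a ∈ t, (2*(f a * g a) + (g a)^2) := by
    rw [← Finset.sum_add_distrib]
    exact Finset.sum_congr rfl fun a _ => by ring
  have he2 : ∑ a ∈ t, (2*(f a * g a) + (g a)^2)
      = 2 * (∑ a ∈ t, f a * g a) + ∑ a ∈ t, (g a)^2 := by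
    rw [Finset.sum_add_distrib, Finset.mul_sum]
  have hexp : ∑ a ∈ t, (f a + g a)^2
      ≤ (Real.sqrt (∑ a ∈ t, (f a)^2) + Real.sqrt (∑ a ∈ t, (g a)^2))^2 := by
    rw [he, he2]
    have hA' := Real.sq_sqrt hA
    have hB' := Real.sq_sqrt hB
    nlinarith [hcs]
  calc Real.sqrt (∑ a ∈ t, (f a + g a)^2)
      ≤ Real.sqrt ((Real.sqrt (∑ a ∈ t, (f a)^2) + Real.sqrt (∑ a ∈ t, (g a)^2))^2) :=
        Real.sqrt_le_sqrt hexp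
    _ = _ := Real.sqrt_sq (by positivity)

-- general Minkowski over a finite index set
lemma minkowski {ι α : Type*} [DecidableEq ι] (s : Finset ι) (t : Finset α) (F : ι → α → ℝ) :
    Real.sqrt (∑ a ∈ t, (∑ i ∈ s, F i a)^2) ≤ ∑ i ∈ s, Real.sqrt (∑ a ∈ t, (F i a)^2) := by
  induction s using Finset.cons_induction with
  | empty => simp
  | cons i s his ih =>
      rw [Finset.sum_cons]
      calc Real.sqrt (∑ a ∈ t, (∑ j ∈ Finset.cons i s his, F j a)^2)
          = Real.sqrt (∑ a ∈ t, (F i a + ∑ j ∈ s, F j a)^2) := by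
            congr 1; apply Finset.sum_congr rfl; intro a _; rw [Finset.sum_cons]
        _ ≤ Real.sqrt (∑ a ∈ t, (F i a)^2) + Real.sqrt (∑ a ∈ t, (∑ j ∈ s, F j a)^2) :=
            minkowski_two t (F i) (fun a => ∑ j ∈ s, F j a)
        _ ≤ _ := by exact add_le_add le_rfl ih

-- geometric sum bound
lemma geom_bound (r : ℝ) (h0 : 0 ≤ r) (h1 : r < 1) (N : ℕ) :
    ∑ d ∈ Finset.range N, r^d ≤ 1 / (1 - r) := by
  have h2 : 0 < 1 - r := by linarith
  have hmul := geom_sum_mul r N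
  rw [le_div_iff₀ h2]
  nlinarith [pow_nonneg h0 N]

lemma pow_le_base (x c : ℝ) (hx : 0 ≤ x) (hc : 0 ≤ c) (h : x^6 ≤ c^6) : x ≤ c := by
  by_contra hcon
  push_neg at hcon
  have := pow_lt_pow_left₀ hcon hc (show 6 ≠ 0 by norm_num)
  linarith

lemma r6_le : (2:ℝ)^(-(1/6) : ℝ) ≤ 9/10 := by
  apply pow_le_base _ _ (by positivity) (by norm_num)
  have h : ((2:ℝ)^(-(1/6):ℝ))^(6:ℕ) = 1/2 := by
    rw [← Real.rpow_natCast ((2:ℝ)^(-(1/6):ℝ)) 6, ← Real.rpow_mul (by norm_num : (0:ℝ) ≤ 2)]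
    rw [show ((-(1/6):ℝ) * ((6:ℕ):ℝ)) = (-1 : ℝ) by push_cast; norm_num]
    rw [Real.rpow_neg_one]
    norm_num
  rw [h]; norm_num

lemma r2_le : (2:ℝ)^(-(1/2) : ℝ) ≤ 3/4 := by
  have h : ((2:ℝ)^(-(1/2):ℝ))^(2:ℕ) = 1/2 := by
    rw [← Real.rpow_natCast ((2:ℝ)^(-(1/2):ℝ)) 2, ← Real.rpow_mul (by norm_num : (0:ℝ) ≤ 2)]
    rw [show ((-(1/2):ℝ) * ((2:ℕ):ℝ)) = (-1 : ℝ) by push_cast; norm_num]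
    rw [Real.rpow_neg_one]
    norm_num
  by_contra hcon
  push_neg at hcon
  have := pow_lt_pow_left₀ hcon (show (0:ℝ) ≤ 3/4 by norm_num) (show 2 ≠ 0 by norm_num)
  rw [h] at this
  norm_num at this

-- 2^{-(d:ℕ)/c} = (2^{-1/c})^d
lemma rpow_nat_div (c : ℝ) (d : ℕ) : (2:ℝ)^(-(d:ℝ)/c) = ((2:ℝ)^(-(1/c):ℝ))^d := by
  rw [← Real.rpow_natCast ((2:ℝ)^(-(1/c):ℝ)) d, ← Real.rpow_mul (by norm_num : (0:ℝ) ≤ 2)]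
  congr 1
  ring

-- row sum bound for Schur kernel
lemma row_sum (J : ℕ) (j : ℕ) :
    ∑ k ∈ Finset.range J, (2:ℝ)^(-(|(j:ℝ) - (k:ℝ)|)/6) ≤ 20 := by
  classical
  set r : ℝ := (2:ℝ)^(-(1/6) : ℝ) with hr
  have hr0 : 0 ≤ r := by positivity
  have hr1 : r < 1 := lt_of_le_of_lt r6_le (by norm_num)
  have hgeom : ∀ N : ℕ, ∑ d ∈ Finset.range N, r^d ≤ 10 := by
    intro N
    calc ∑ d ∈ Finset.range N, r^d ≤ 1/(1-r) := geom_bound r hr0 hr1 N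
      _ ≤ 10 := by
          rw [div_le_iff₀ (by simp only [hr]; linarith [r6_le])]
          simp only [hr]
          linarith [r6_le]
  rw [← Finset.sum_filter_add_sum_filter_not (Finset.range J) (fun k => k ≤ j)]
  have h1 : ∑ k ∈ (Finset.range J).filter (fun k => k ≤ j), (2:ℝ)^(-(|(j:ℝ) - (k:ℝ)|)/6)
      ≤ 10 := by
    have heq : ∀ k ∈ (Finset.range J).filter (fun k => k ≤ j),
        (2:ℝ)^(-(|(j:ℝ) - (k:ℝ)|)/6) = r^(j - k) := by
      intro k hk
      have hk2 : k ≤ j := (Finset.mem_filter.1 hk).2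
      rw [abs_of_nonneg (sub_nonneg.2 (show (k:ℝ) ≤ (j:ℝ) by exact_mod_cast hk2))]
      rw [show ((j:ℝ) - (k:ℝ)) = (((j - k : ℕ)):ℝ) by push_cast [Nat.cast_sub hk2]; ring]
      exact rpow_nat_div 6 (j-k)
    have hsc := Finset.sum_congr rfl heq
    rw [hsc]
    calc ∑ k ∈ (Finset.range J).filter (fun k => k ≤ j), r^(j-k)
        = ∑ d ∈ ((Finset.range J).filter (fun k => k ≤ j)).image (fun k => j - k), r^d := by
          rw [Finset.sum_image]
          intro a ha b hb hab
          have ha2 := (Finset.mem_filter.1 ha).2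
          have hb2 := (Finset.mem_filter.1 hb).2
          simp only at hab; omega
      _ ≤ ∑ d ∈ Finset.range (j+1), r^d := by
          apply Finset.sum_le_sum_of_subset_of_nonneg
          · intro d hd
            obtain ⟨k, hk, rfl⟩ := Finset.mem_image.1 hd
            simp only [Finset.mem_range]
            omega
          · intro d _ _; positivity
      _ ≤ 10 := hgeom _
  have h2 : ∑ k ∈ (Finset.range J).filter (fun k => ¬ k ≤ j), (2:ℝ)^(-(|(j:ℝ) - (k:ℝ)|)/6)
      ≤ 10 := by
    have heq : ∀ k ∈ (Finset.range J).filter (fun k => ¬ k ≤ j),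
        (2:ℝ)^(-(|(j:ℝ) - (k:ℝ)|)/6) = r^(k - j) := by
      intro k hk
      have hk2 : ¬ k ≤ j := (Finset.mem_filter.1 hk).2
      have hjk : j ≤ k := by omega
      rw [abs_of_nonpos (sub_nonpos.2 (show (j:ℝ) ≤ (k:ℝ) by exact_mod_cast hjk))]
      rw [show (- -((j:ℝ) - (k:ℝ))) = -(((k - j : ℕ)):ℝ) by push_cast [Nat.cast_sub hjk]; ring]
      exact rpow_nat_div 6 (k-j)
    have hsc := Finset.sum_congr rfl heq
    rw [hsc]
    calc ∑ k ∈ (Finset.range J).filter (fun k => ¬ k ≤ j), r^(k-j)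
        = ∑ d ∈ ((Finset.range J).filter (fun k => ¬ k ≤ j)).image (fun k => k - j), r^d := by
          rw [Finset.sum_image]
          intro a ha b hb hab
          have ha2 := (Finset.mem_filter.1 ha).2
          have hb2 := (Finset.mem_filter.1 hb).2
          simp only at hab; omega
      _ ≤ ∑ d ∈ Finset.range (J+1), r^d := by
          apply Finset.sum_le_sum_of_subset_of_nonneg
          · intro d hd
            obtain ⟨k, hk, rfl⟩ := Finset.mem_image.1 hd
            have := (Finset.mem_filter.1 hk).1
            simp only [Finset.mem_range] at *
            omega
          · intro d _ _; positivity
      _ ≤ 10 := hgeom _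
  linarith

-- the Schur test
lemma schur (J K : ℕ) (x y : ℕ → ℝ) (hx : ∀ j, 0 ≤ x j) (hy : ∀ k, 0 ≤ y k) :
    ∑ j ∈ Finset.range J, ∑ k ∈ Finset.range K, (2:ℝ)^(-(|(j:ℝ) - (k:ℝ)|)/6) * x j * y k
      ≤ 20 * Real.sqrt (∑ j ∈ Finset.range J, (x j)^2) * Real.sqrt (∑ k ∈ Finset.range K, (y k)^2) := by
  classical
  set T := (Finset.range J) ×ˢ (Finset.range K) with hT
  have hsplit : ∀ j k : ℕ, (2:ℝ)^(-(|(j:ℝ) - (k:ℝ)|)/6)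
      = (2:ℝ)^(-(|(j:ℝ) - (k:ℝ)|)/12) * (2:ℝ)^(-(|(j:ℝ) - (k:ℝ)|)/12) := by
    intro j k
    rw [← Real.rpow_add (by norm_num)]
    congr 1; ring
  have hmain : ∑ j ∈ Finset.range J, ∑ k ∈ Finset.range K, (2:ℝ)^(-(|(j:ℝ) - (k:ℝ)|)/6) * x j * y k
      = ∑ p ∈ T, ((2:ℝ)^(-(|(p.1:ℝ) - (p.2:ℝ)|)/12) * x p.1) * ((2:ℝ)^(-(|(p.1:ℝ) - (p.2:ℝ)|)/12) * y p.2) := by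
    rw [Finset.sum_product]
    apply Finset.sum_congr rfl; intro j _
    apply Finset.sum_congr rfl; intro k _
    rw [hsplit j k]; ring
  rw [hmain]
  have hcs := Finset.sum_mul_sq_le_sq_mul_sq T
    (fun p => (2:ℝ)^(-(|(p.1:ℝ) - (p.2:ℝ)|)/12) * x p.1)
    (fun p => (2:ℝ)^(-(|(p.1:ℝ) - (p.2:ℝ)|)/12) * y p.2)
  have hF : ∑ p ∈ T, ((2:ℝ)^(-(|(p.1:ℝ) - (p.2:ℝ)|)/12) * x p.1)^2
      ≤ 20 * ∑ j ∈ Finset.range J, (x j)^2 := by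
    have heq : ∑ p ∈ T, ((2:ℝ)^(-(|(p.1:ℝ) - (p.2:ℝ)|)/12) * x p.1)^2
        = ∑ j ∈ Finset.range J, (x j)^2 * ∑ k ∈ Finset.range K, (2:ℝ)^(-(|(j:ℝ) - (k:ℝ)|)/6) := by
      rw [Finset.sum_product]
      apply Finset.sum_congr rfl; intro j _
      rw [Finset.mul_sum]
      apply Finset.sum_congr rfl; intro k _
      rw [mul_pow, ← Real.rpow_natCast ((2:ℝ)^(-(|(j:ℝ) - (k:ℝ)|)/12)) 2,
        ← Real.rpow_mul (by norm_num : (0:ℝ) ≤ 2)]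
      rw [show (-(|(j:ℝ) - (k:ℝ)|)/12 * ((2:ℕ):ℝ) : ℝ) = -(|(j:ℝ) - (k:ℝ)|)/6 by push_cast; ring]
      ring
    rw [heq, Finset.mul_sum]
    apply Finset.sum_le_sum
    intro j _
    have h20 := row_sum K j
    have hx2 : (0:ℝ) ≤ (x j)^2 := by positivity
    nlinarith
  have hG : ∑ p ∈ T, ((2:ℝ)^(-(|(p.1:ℝ) - (p.2:ℝ)|)/12) * y p.2)^2
      ≤ 20 * ∑ k ∈ Finset.range K, (y k)^2 := by
    have heq : ∑ p ∈ T, ((2:ℝ)^(-(|(p.1:ℝ) - (p.2:ℝ)|)/12) * y p.2)^2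
        = ∑ k ∈ Finset.range K, (y k)^2 * ∑ j ∈ Finset.range J, (2:ℝ)^(-(|(j:ℝ) - (k:ℝ)|)/6) := by
      rw [Finset.sum_product_right]
      apply Finset.sum_congr rfl; intro k _
      rw [Finset.mul_sum]
      apply Finset.sum_congr rfl; intro j _
      rw [mul_pow, ← Real.rpow_natCast ((2:ℝ)^(-(|(j:ℝ) - (k:ℝ)|)/12)) 2,
        ← Real.rpow_mul (by norm_num : (0:ℝ) ≤ 2)]
      rw [show (-(|(j:ℝ) - (k:ℝ)|)/12 * ((2:ℕ):ℝ) : ℝ) = -(|(j:ℝ) - (k:ℝ)|)/6 by push_cast; ring]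
      ring
    rw [heq, Finset.mul_sum]
    apply Finset.sum_le_sum
    intro k _
    have h20 : ∑ j ∈ Finset.range J, (2:ℝ)^(-(|(j:ℝ) - (k:ℝ)|)/6) ≤ 20 := by
      calc ∑ j ∈ Finset.range J, (2:ℝ)^(-(|(j:ℝ) - (k:ℝ)|)/6)
          = ∑ j ∈ Finset.range J, (2:ℝ)^(-(|(k:ℝ) - (j:ℝ)|)/6) := by
            apply Finset.sum_congr rfl; intro j _; rw [abs_sub_comm]
        _ ≤ 20 := row_sum J k
    have hy2 : (0:ℝ) ≤ (y k)^2 := by positivity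
    nlinarith
  have hnonneg : (0:ℝ) ≤ ∑ p ∈ T, ((2:ℝ)^(-(|(p.1:ℝ) - (p.2:ℝ)|)/12) * x p.1) * ((2:ℝ)^(-(|(p.1:ℝ) - (p.2:ℝ)|)/12) * y p.2) := by
    apply Finset.sum_nonneg
    intro p _
    have := hx p.1; have := hy p.2
    positivity
  have hsq : (∑ p ∈ T, ((2:ℝ)^(-(|(p.1:ℝ) - (p.2:ℝ)|)/12) * x p.1) * ((2:ℝ)^(-(|(p.1:ℝ) - (p.2:ℝ)|)/12) * y p.2))^2
      ≤ (20 * ∑ j ∈ Finset.range J, (x j)^2) * (20 * ∑ k ∈ Finset.range K, (y k)^2) := by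
    calc _ ≤ _ := hcs
    _ ≤ _ := by
        apply mul_le_mul hF hG (by positivity) (by positivity)
  have hs20 : Real.sqrt 20 * Real.sqrt 20 = 20 := Real.mul_self_sqrt (by norm_num)
  calc ∑ p ∈ T, ((2:ℝ)^(-(|(p.1:ℝ) - (p.2:ℝ)|)/12) * x p.1) * ((2:ℝ)^(-(|(p.1:ℝ) - (p.2:ℝ)|)/12) * y p.2)
      = Real.sqrt ((∑ p ∈ T, ((2:ℝ)^(-(|(p.1:ℝ) - (p.2:ℝ)|)/12) * x p.1) * ((2:ℝ)^(-(|(p.1:ℝ) - (p.2:ℝ)|)/12) * y p.2))^2) := by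
        rw [Real.sqrt_sq hnonneg]
    _ ≤ Real.sqrt ((20 * ∑ j ∈ Finset.range J, (x j)^2) * (20 * ∑ k ∈ Finset.range K, (y k)^2)) := Real.sqrt_le_sqrt hsq
    _ = (Real.sqrt 20 * Real.sqrt (∑ j ∈ Finset.range J, (x j)^2)) * (Real.sqrt 20 * Real.sqrt (∑ k ∈ Finset.range K, (y k)^2)) := by
        rw [Real.sqrt_mul (by positivity), Real.sqrt_mul (by norm_num), Real.sqrt_mul (by norm_num)]
    _ = (Real.sqrt 20 * Real.sqrt 20) * (Real.sqrt (∑ j ∈ Finset.range J, (x j)^2) * Real.sqrt (∑ k ∈ Finset.range K, (y k)^2)) := by ring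
    _ = _ := by rw [hs20]; ring

section Core
open Classical

-- column sums
def colf (a b : ℤ×ℤ → ℝ) (SA : Finset (ℤ×ℤ)) (n₁ : ℤ) (p : ℤ×ℤ) : ℝ :=
  ∑ q ∈ SA.filter (fun q => q.1 = n₁), a q * b (p - q)

def colsq (a b : ℤ×ℤ → ℝ) (SA : Finset (ℤ×ℤ)) (n₁ : ℤ) (p : ℤ×ℤ) : ℝ :=
  ∑ q ∈ SA.filter (fun q => q.1 = n₁), (a q)^2 * (b (p - q))^2

def gf (a b : ℤ×ℤ → ℝ) (SA : Finset (ℤ×ℤ)) (p : ℤ×ℤ) : ℝ :=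
  ∑ q ∈ SA, a q * b (p - q)

def tht (b : ℤ×ℤ → ℝ) (SB : Finset (ℤ×ℤ)) (ℓ : ℕ) (n₁ : ℤ) : ℝ :=
  ∑ q₂ ∈ SB.filter (fun q₂ => slev (q₂.1 + n₁) = ℓ), (b q₂)^2

variable {a b : ℤ×ℤ → ℝ} {SA SB : Finset (ℤ×ℤ)} {j k : ℕ}

lemma colf_nonneg (ha : ∀ q, 0 ≤ a q) (hb : ∀ q, 0 ≤ b q) (n₁ : ℤ) (p : ℤ×ℤ) :
    0 ≤ colf a b SA n₁ p :=
  Finset.sum_nonneg fun q _ => mul_nonneg (ha q) (hb _)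

lemma colsq_nonneg (n₁ : ℤ) (p : ℤ×ℤ) : 0 ≤ colsq a b SA n₁ p :=
  Finset.sum_nonneg fun q _ => mul_nonneg (by positivity) (by positivity)

lemma tht_nonneg (ℓ : ℕ) (n₁ : ℤ) : 0 ≤ tht b SB ℓ n₁ :=
  Finset.sum_nonneg fun q _ => by positivity

lemma tht_le_Y (ℓ : ℕ) (n₁ : ℤ) : tht b SB ℓ n₁ ≤ ∑ q₂ ∈ SB, (b q₂)^2 := by
  apply Finset.sum_le_sum_of_subset_of_nonneg (Finset.filter_subset _ _)
  intro q _ _; positivity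

-- fiberwise decomposition of gf
lemma gf_eq_sum_colf (a b : ℤ×ℤ → ℝ) (SA : Finset (ℤ×ℤ)) (p : ℤ×ℤ) :
    gf a b SA p = ∑ n₁ ∈ SA.image Prod.fst, colf a b SA n₁ p := by
  unfold gf colf
  exact (Finset.sum_fiberwise_of_maps_to (fun q hq => Finset.mem_image_of_mem Prod.fst hq) _).symm

-- column counting Cauchy-Schwarz
lemma colf_sq_le
    (ha : ∀ q, 0 ≤ a q) (hb : ∀ q, 0 ≤ b q)
    (haj : ∀ q, a q ≠ 0 → lev q = j) (hbk : ∀ q, b q ≠ 0 → lev q = k)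
    (n₁ : ℤ) (p : ℤ×ℤ) :
    (colf a b SA n₁ p)^2 ≤ (2:ℝ)^((min j k : ℝ)+2) * colsq a b SA n₁ p := by
  classical
  set Fib := SA.filter (fun q => q.1 = n₁) with hFib
  set F := Fib.filter (fun q => a q * b (p - q) ≠ 0) with hF
  have hcol : colf a b SA n₁ p = ∑ q ∈ F, a q * b (p-q) := by
    rw [hF]
    exact (Finset.sum_filter_ne_zero Fib).symm
  have hcs : (∑ q ∈ F, a q * b (p-q))^2 ≤ F.card * ∑ q ∈ F, (a q * b (p-q))^2 :=
    sq_sum_le_card F _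
  have hsub : ∑ q ∈ F, (a q * b (p-q))^2 ≤ colsq a b SA n₁ p := by
    unfold colsq
    rw [hF, hFib]
    calc ∑ q ∈ F, (a q * b (p-q))^2 = ∑ q ∈ F, (a q)^2 * (b (p-q))^2 := by
          apply Finset.sum_congr rfl; intro q _; ring
      _ ≤ _ := Finset.sum_le_sum_of_subset_of_nonneg (by rw [hF]; exact Finset.filter_subset _ _)
            (fun q _ _ => by positivity)
  -- cardinality bound
  have hcards : ∀ m : ℕ, ((∀ q ∈ F, lev q = m) ∨ (∀ q ∈ F, lev (p - q) = m)) →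
      (F.card : ℝ) ≤ (2:ℝ)^((m:ℝ)+2) := by
    intro m hm
    have hR : (0:ℤ) ≤ 2^(m+1) - 2 := by
      have : (2:ℤ) ≤ 2^(m+1) := by
        calc (2:ℤ) = 2^1 := rfl
        _ ≤ 2^(m+1) := pow_le_pow_right₀ (by norm_num) (by omega)
      omega
    have hfst : ∀ q ∈ F, q.1 = n₁ := by
      intro q hq
      exact (Finset.mem_filter.1 ((Finset.mem_filter.1 hq).1)).2
    rcases hm with hm | hm
    · have hicc : ∀ q ∈ F, |q.2 - P n₁| ≤ 2^(m+1) - 2 := by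
        intro q hq
        have h1 := natAbs_sig_le q m (hm q hq)
        have h2 : sig q = q.2 - P n₁ := by rw [sig, hfst q hq]
        have h3 : |sig q| = ((sig q).natAbs : ℤ) := Int.abs_eq_natAbs _
        have h4 : ((sig q).natAbs : ℤ) ≤ ((2^(m+1) - 2 : ℕ) : ℤ) := by exact_mod_cast h1
        have h5 : ((2^(m+1) - 2 : ℕ) : ℤ) = 2^(m+1) - 2 := by
          push_cast [Nat.cast_sub (show 2 ≤ 2^(m+1) by
            calc 2 = 2^1 := rfl
            _ ≤ 2^(m+1) := Nat.pow_le_pow_right (by norm_num) (by omega))]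
          ring
        rw [← h2]
        omega
      have := card_snd_Icc F n₁ (P n₁) (2^(m+1) - 2) hR hfst hicc
      calc (F.card : ℝ) ≤ 2*((2^(m+1) - 2 : ℤ):ℝ) + 1 := this
        _ ≤ (2:ℝ)^((m:ℝ)+2) := by
            have h6 : (2:ℝ)^((m:ℝ)+2) = 4 * 2^(m:ℝ) := by
              rw [show ((m:ℝ)+2) = (m:ℝ)+1+1 by ring, Real.rpow_add (by norm_num : (0:ℝ) < 2),
                Real.rpow_add (by norm_num : (0:ℝ) < 2), Real.rpow_one]
              ring
            have h7 : ((2:ℝ))^(m+1 : ℕ) = 2 * (2:ℝ)^(m:ℝ) := by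
              rw [pow_succ, ← Real.rpow_natCast 2 m]; ring
            have h8 : (0:ℝ) ≤ (2:ℝ)^(m:ℝ) := by positivity
            push_cast
            rw [h6, h7]
            linarith
    · have hicc : ∀ q ∈ F, |q.2 - (p.2 - P (p.1 - n₁))| ≤ 2^(m+1) - 2 := by
        intro q hq
        have h1 := natAbs_sig_le (p - q) m (hm q hq)
        have h2 : sig (p - q) = (p.2 - q.2) - P (p.1 - n₁) := by
          rw [sig]
          have : (p - q).1 = p.1 - n₁ := by
            rw [Prod.fst_sub, hfst q hq]
          rw [this, Prod.snd_sub]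
        have h3 : |sig (p-q)| = ((sig (p-q)).natAbs : ℤ) := Int.abs_eq_natAbs _
        have h4 : ((sig (p-q)).natAbs : ℤ) ≤ ((2^(m+1) - 2 : ℕ) : ℤ) := by exact_mod_cast h1
        have h5 : ((2^(m+1) - 2 : ℕ) : ℤ) = 2^(m+1) - 2 := by
          push_cast [Nat.cast_sub (show 2 ≤ 2^(m+1) by
            calc 2 = 2^1 := rfl
            _ ≤ 2^(m+1) := Nat.pow_le_pow_right (by norm_num) (by omega))]
          ring
        have h6 : q.2 - (p.2 - P (p.1 - n₁)) = -(sig (p - q)) := by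
          rw [h2]; ring
        rw [h6, abs_neg]
        omega
      have := card_snd_Icc F n₁ (p.2 - P (p.1 - n₁)) (2^(m+1) - 2) hR hfst hicc
      calc (F.card : ℝ) ≤ 2*((2^(m+1) - 2 : ℤ):ℝ) + 1 := this
        _ ≤ (2:ℝ)^((m:ℝ)+2) := by
            have h6 : (2:ℝ)^((m:ℝ)+2) = 4 * 2^(m:ℝ) := by
              rw [show ((m:ℝ)+2) = (m:ℝ)+1+1 by ring, Real.rpow_add (by norm_num : (0:ℝ) < 2),
                Real.rpow_add (by norm_num : (0:ℝ) < 2), Real.rpow_one]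
              ring
            have h7 : ((2:ℝ))^(m+1 : ℕ) = 2 * (2:ℝ)^(m:ℝ) := by
              rw [pow_succ, ← Real.rpow_natCast 2 m]; ring
            have h8 : (0:ℝ) ≤ (2:ℝ)^(m:ℝ) := by positivity
            push_cast
            rw [h6, h7]
            linarith
  have hcard : (F.card : ℝ) ≤ (2:ℝ)^((min j k : ℝ)+2) := by
    rcases le_total j k with h | h
    · rw [show (min (j:ℝ) (k:ℝ)) = (j:ℝ) from min_eq_left (by exact_mod_cast h)]
      apply hcards j
      left
      intro q hq
      have := (Finset.mem_filter.1 hq).2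
      have ha0 : a q ≠ 0 := by
        intro h0
        apply this
        rw [h0, zero_mul]
      exact haj q ha0
    · rw [show (min (j:ℝ) (k:ℝ)) = (k:ℝ) from min_eq_right (by exact_mod_cast h)]
      apply hcards k
      right
      intro q hq
      have := (Finset.mem_filter.1 hq).2
      have hb0 : b (p - q) ≠ 0 := by
        intro h0
        apply this
        rw [h0, mul_zero]
      exact hbk _ hb0
  calc (colf a b SA n₁ p)^2 = (∑ q ∈ F, a q * b (p-q))^2 := by rw [hcol]
    _ ≤ F.card * ∑ q ∈ F, (a q * b (p-q))^2 := hcs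
    _ ≤ (2:ℝ)^((min j k : ℝ)+2) * colsq a b SA n₁ p := by
        apply mul_le_mul hcard hsub (Finset.sum_nonneg fun q _ => by positivity)
        positivity

lemma sqrt_rpow_two (e : ℝ) : Real.sqrt ((2:ℝ)^e) = (2:ℝ)^(e/2) := by
  rw [show (2:ℝ)^e = ((2:ℝ)^(e/2))^2 by
    rw [← Real.rpow_natCast ((2:ℝ)^(e/2)) 2, ← Real.rpow_mul (by norm_num : (0:ℝ) ≤ 2)]
    congr 1
    push_cast; ring]
  exact Real.sqrt_sq (by positivity)

lemma cand_card
    (haj : ∀ q, a q ≠ 0 → lev q = j) (hbk : ∀ q, b q ≠ 0 → lev q = k)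
    (p : ℤ×ℤ) :
    ((((SA.image Prod.fst)).filter (fun n₁ => colf a b SA n₁ p ≠ 0)).card : ℝ)
      ≤ 2*(1 + (2:ℝ)^(((max j k : ℝ) + 6 - (slev p.1 : ℝ))/2)) := by
  classical
  set n := p.1 with hn
  set M := sig p with hM
  set D : ℤ := 3*n - 4 with hD
  set ℓ := slev n with hℓ
  set N := ((SA.image Prod.fst)).filter (fun n₁ => colf a b SA n₁ p ≠ 0) with hN
  have hD0 : D ≠ 0 := by simp only [hD]; omega
  have hDr0 : ((D:ℤ):ℝ) ≠ 0 := by exact_mod_cast hD0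
  have hgain : (2:ℝ)^((ℓ : ℝ)-1) ≤ |((D : ℤ) : ℝ)| := by
    have := gain n
    simpa [hD, hℓ] using this
  have hDpos : (0:ℝ) < |((D:ℤ):ℝ)| := lt_of_lt_of_le (by positivity) hgain
  set half : ℝ := (2:ℝ)^((max j k : ℝ)+4) / |((D:ℤ):ℝ)| with hhalf
  have hhalfpos : 0 < half := by positivity
  set c : ℝ := (n:ℝ)^2 + 4*((M:ℤ):ℝ)/((D:ℤ):ℝ) - half with hc
  set δ : ℝ := 2*half with hδdef
  have hδ : 0 ≤ δ := by positivity
  have hmem : ∀ x ∈ N.image (fun n₁ => 2*n₁ - n), c ≤ ((x:ℝ))^2 ∧ ((x:ℝ))^2 ≤ c + δ := by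
    intro x hx
    obtain ⟨n₁, hn₁, rfl⟩ := Finset.mem_image.1 hx
    have hcol : colf a b SA n₁ p ≠ 0 := (Finset.mem_filter.1 hn₁).2
    obtain ⟨q, hq, hq0⟩ := Finset.exists_ne_zero_of_sum_ne_zero hcol
    have hq1 : q.1 = n₁ := (Finset.mem_filter.1 hq).2
    have ha0 : a q ≠ 0 := fun h => hq0 (by rw [h, zero_mul])
    have hb0 : b (p - q) ≠ 0 := fun h => hq0 (by rw [h, mul_zero])
    set E : ℤ := sig q + sig (p - q) with hE
    have hEineq : |E| ≤ 2^(max j k + 2) := by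
      have h1 := natAbs_sig_le q j (haj q ha0)
      have h2 := natAbs_sig_le (p - q) k (hbk _ hb0)
      have h3 : |sig q| = ((sig q).natAbs : ℤ) := Int.abs_eq_natAbs _
      have h4 : |sig (p-q)| = ((sig (p-q)).natAbs : ℤ) := Int.abs_eq_natAbs _
      have h5 : ((sig q).natAbs : ℤ) ≤ 2^(j+1) := by
        have h5a : ((sig q).natAbs : ℤ) ≤ ((2^(j+1) - 2 : ℕ) : ℤ) := by exact_mod_cast h1
        have h5b : ((2^(j+1) - 2 : ℕ) : ℤ) ≤ ((2^(j+1) : ℕ) : ℤ) := by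
          exact_mod_cast Nat.sub_le _ _
        have h5c : ((2^(j+1) : ℕ) : ℤ) = 2^(j+1) := by push_cast; ring
        omega
      have h6 : ((sig (p-q)).natAbs : ℤ) ≤ 2^(k+1) := by
        have h6a : ((sig (p-q)).natAbs : ℤ) ≤ ((2^(k+1) - 2 : ℕ) : ℤ) := by exact_mod_cast h2
        have h6b : ((2^(k+1) - 2 : ℕ) : ℤ) ≤ ((2^(k+1) : ℕ) : ℤ) := by
          exact_mod_cast Nat.sub_le _ _
        have h6c : ((2^(k+1) : ℕ) : ℤ) = 2^(k+1) := by push_cast; ring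
        omega
      have hj : (2:ℤ)^(j+1) ≤ 2^(max j k + 1) := pow_le_pow_right₀ (by norm_num) (by omega)
      have hk : (2:ℤ)^(k+1) ≤ 2^(max j k + 1) := pow_le_pow_right₀ (by norm_num) (by omega)
      have hmx : (2:ℤ)^(max j k + 2) = 2^(max j k + 1) + 2^(max j k + 1) := by ring
      have htri := abs_add_le (sig q) (sig (p-q))
      rw [← hE] at htri
      omega
    have hres : E = M + D * (q.1 * (n - q.1)) := by
      rw [hE, hM, hD, hn]
      exact resonance p q
    set x : ℤ := 2*n₁ - n with hx
    have hint : D * x^2 = D * n^2 - 4*(E - M) := by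
      rw [hres, hx, ← hq1]
      ring
    have hreal : ((D:ℤ):ℝ) * ((x:ℤ):ℝ)^2 = ((D:ℤ):ℝ) * ((n:ℤ):ℝ)^2 - 4*(((E:ℤ):ℝ) - ((M:ℤ):ℝ)) := by
      exact_mod_cast congrArg (fun z : ℤ => (z:ℝ)) hint
    have hdiff : ((x:ℤ):ℝ)^2 - (((n:ℤ):ℝ)^2 + 4*((M:ℤ):ℝ)/((D:ℤ):ℝ)) = -(4*((E:ℤ):ℝ))/((D:ℤ):ℝ) := by
      field_simp
      linarith [hreal]
    have hEre : |((E:ℤ):ℝ)| ≤ (2:ℝ)^((max j k : ℝ)+2) := by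
      have h1 : |((E:ℤ):ℝ)| = ((|E| : ℤ) : ℝ) := by rw [Int.cast_abs]
      rw [h1]
      have h2 : ((|E| : ℤ):ℝ) ≤ (((2:ℤ)^(max j k + 2) : ℤ):ℝ) := by exact_mod_cast hEineq
      calc ((|E| : ℤ):ℝ) ≤ (((2:ℤ)^(max j k + 2) : ℤ):ℝ) := h2
        _ = (2:ℝ)^((max j k : ℝ)+2) := by
            push_cast
            rw [show ((max j k : ℝ)+2) = ((max j k + 2 : ℕ) : ℝ) by push_cast; ring,
              Real.rpow_natCast]
    have habs : |((x:ℤ):ℝ)^2 - (((n:ℤ):ℝ)^2 + 4*((M:ℤ):ℝ)/((D:ℤ):ℝ))| ≤ half := by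
      rw [hdiff, abs_div, abs_neg, abs_mul, hhalf]
      have h4E : |(4:ℝ)| * |((E:ℤ):ℝ)| ≤ (2:ℝ)^((max j k:ℝ)+4) := by
        rw [abs_of_nonneg (by norm_num : (0:ℝ) ≤ 4)]
        have hh : (2:ℝ)^((max j k:ℝ)+4) = 4 * (2:ℝ)^((max j k:ℝ)+2) := by
          rw [show ((max j k:ℝ)+4) = ((max j k:ℝ)+2)+1+1 by ring,
            Real.rpow_add (by norm_num : (0:ℝ) < 2), Real.rpow_add (by norm_num : (0:ℝ) < 2),
            Real.rpow_one]
          ring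
        rw [hh]
        linarith [hEre]
      exact (div_le_div_iff_of_pos_right hDpos).2 h4E
    have hle := abs_le.1 habs
    constructor
    · rw [hc]
      have := hle.1
      push_cast at this ⊢
      linarith
    · rw [hc, hδdef]
      have := hle.2
      push_cast at this ⊢
      linarith
  have hcount := sq_count c δ hδ (N.image (fun n₁ => 2*n₁ - n)) hmem
  have hinj : (N.image (fun n₁ => 2*n₁ - n)).card = N.card := by
    apply Finset.card_image_of_injOn
    intro u _ v _ h
    dsimp only at h
    omega
  have hcard : (N.card : ℝ) ≤ 2*(1 + Real.sqrt δ) := by rw [← hinj]; exact hcount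
  have hδle : δ ≤ (2:ℝ)^((max j k:ℝ)+6-(ℓ:ℝ)) := by
    have hstep : δ = (2:ℝ)^((max j k:ℝ)+5)/|((D:ℤ):ℝ)| := by
      rw [hδdef, hhalf]
      rw [show (2:ℝ)^((max j k:ℝ)+5) = 2 * (2:ℝ)^((max j k:ℝ)+4) by
        rw [show ((max j k:ℝ)+5) = ((max j k:ℝ)+4)+1 by ring,
          Real.rpow_add (by norm_num : (0:ℝ) < 2), Real.rpow_one]
        ring]
      ring
    rw [hstep]
    have h2 : (2:ℝ)^((max j k:ℝ)+5)/|((D:ℤ):ℝ)| ≤ (2:ℝ)^((max j k:ℝ)+5)/(2:ℝ)^((ℓ:ℝ)-1) :=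
      div_le_div_of_nonneg_left (by positivity) (by positivity) hgain
    calc (2:ℝ)^((max j k:ℝ)+5)/|((D:ℤ):ℝ)| ≤ (2:ℝ)^((max j k:ℝ)+5)/(2:ℝ)^((ℓ:ℝ)-1) := h2
      _ = (2:ℝ)^((max j k:ℝ)+6-(ℓ:ℝ)) := by
          rw [← Real.rpow_sub (by norm_num : (0:ℝ) < 2)]
          congr 1; ring
  have hsq : Real.sqrt δ ≤ (2:ℝ)^(((max j k:ℝ)+6-(ℓ:ℝ))/2) := by
    calc Real.sqrt δ ≤ Real.sqrt ((2:ℝ)^((max j k:ℝ)+6-(ℓ:ℝ))) := Real.sqrt_le_sqrt hδle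
      _ = (2:ℝ)^(((max j k:ℝ)+6-(ℓ:ℝ))/2) := sqrt_rpow_two _
  calc (N.card : ℝ) ≤ 2*(1 + Real.sqrt δ) := hcard
    _ ≤ 2*(1 + (2:ℝ)^(((max j k : ℝ) + 6 - (ℓ : ℝ))/2)) := by linarith

-- window sum of theta over any set of columns
lemma tht_sum_le (ℓ : ℕ) (N : Finset ℤ) :
    ∑ n₁ ∈ N, tht b SB ℓ n₁ ≤ (2:ℝ)^((ℓ:ℝ)+1) * ∑ q₂ ∈ SB, (b q₂)^2 := by
  classical
  have h1 : ∑ n₁ ∈ N, tht b SB ℓ n₁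
      = ∑ q₂ ∈ SB, ((N.filter (fun n₁ => slev (q₂.1 + n₁) = ℓ)).card : ℝ) * (b q₂)^2 := by
    unfold tht
    calc ∑ n₁ ∈ N, ∑ q₂ ∈ SB.filter (fun q₂ => slev (q₂.1 + n₁) = ℓ), (b q₂)^2
        = ∑ n₁ ∈ N, ∑ q₂ ∈ SB, if slev (q₂.1 + n₁) = ℓ then (b q₂)^2 else 0 := by
          apply Finset.sum_congr rfl; intro n₁ _
          rw [Finset.sum_filter]
      _ = ∑ q₂ ∈ SB, ∑ n₁ ∈ N, if slev (q₂.1 + n₁) = ℓ then (b q₂)^2 else 0 := Finset.sum_comm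
      _ = ∑ q₂ ∈ SB, ((N.filter (fun n₁ => slev (q₂.1 + n₁) = ℓ)).card : ℝ) * (b q₂)^2 := by
          apply Finset.sum_congr rfl; intro q₂ _
          rw [← Finset.sum_filter, Finset.sum_const, nsmul_eq_mul]
  rw [h1, Finset.mul_sum]
  apply Finset.sum_le_sum
  intro q₂ _
  apply mul_le_mul_of_nonneg_right ?_ (by positivity)
  have hinj : ((N.filter (fun n₁ => slev (q₂.1 + n₁) = ℓ)).image (fun n₁ => q₂.1 + n₁)).card
      = (N.filter (fun n₁ => slev (q₂.1 + n₁) = ℓ)).card := by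
    apply Finset.card_image_of_injOn
    intro u _ v _ h
    dsimp only at h
    omega
  rw [← hinj]
  apply card_shell
  intro n hn
  obtain ⟨n₁, hn₁, rfl⟩ := Finset.mem_image.1 hn
  exact (Finset.mem_filter.1 hn₁).2

lemma sum_b_sq_le_tht (hbS : ∀ r, b r ≠ 0 → r ∈ SB) (ℓ : ℕ) (q : ℤ×ℤ) (n₁ : ℤ)
    (hq1 : q.1 = n₁) (T : Finset (ℤ×ℤ)) (hT : ∀ p ∈ T, slev p.1 = ℓ) :
    ∑ p ∈ T, (b (p - q))^2 ≤ tht b SB ℓ n₁ := by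
  classical
  have himg : ∑ p ∈ T, (b (p - q))^2 = ∑ r ∈ T.image (fun p => p - q), (b r)^2 := by
    rw [Finset.sum_image]
    intro u _ v _ h
    exact sub_left_injective h
  rw [himg, ← Finset.sum_filter_ne_zero]
  unfold tht
  apply Finset.sum_le_sum_of_subset_of_nonneg
  · intro r hr
    have hr2 := Finset.mem_filter.1 hr
    obtain ⟨p, hp, rfl⟩ := Finset.mem_image.1 hr2.1
    have hb0 : b (p - q) ≠ 0 := by
      intro h0
      exact hr2.2 (by rw [h0]; ring)
    refine Finset.mem_filter.2 ⟨hbS _ hb0, ?_⟩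
    have heq : (p - q).1 + n₁ = p.1 := by rw [Prod.fst_sub, hq1]; ring
    rw [heq]
    exact hT p hp
  · intro r _ _; positivity

lemma sum_b_sq_le_Y (hbS : ∀ r, b r ≠ 0 → r ∈ SB) (q : ℤ×ℤ) (T : Finset (ℤ×ℤ)) :
    ∑ p ∈ T, (b (p - q))^2 ≤ ∑ q₂ ∈ SB, (b q₂)^2 := by
  classical
  have himg : ∑ p ∈ T, (b (p - q))^2 = ∑ r ∈ T.image (fun p => p - q), (b r)^2 := by
    rw [Finset.sum_image]
    intro u _ v _ h
    exact sub_left_injective h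
  rw [himg, ← Finset.sum_filter_ne_zero]
  apply Finset.sum_le_sum_of_subset_of_nonneg
  · intro r hr
    have hr2 := Finset.mem_filter.1 hr
    have hb0 : b r ≠ 0 := by
      intro h0
      exact hr2.2 (by rw [h0]; ring)
    exact hbS _ hb0
  · intro r _ _; positivity

lemma shell_bound
    (ha : ∀ q, 0 ≤ a q) (hb : ∀ q, 0 ≤ b q)
    (hbS : ∀ r, b r ≠ 0 → r ∈ SB)
    (haj : ∀ q, a q ≠ 0 → lev q = j) (hbk : ∀ q, b q ≠ 0 → lev q = k)
    (ℓ : ℕ) (T : Finset (ℤ×ℤ)) (hT : ∀ p ∈ T, slev p.1 = ℓ) :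
    ∑ p ∈ T, (gf a b SA p)^2
      ≤ (2:ℝ)^((min j k : ℝ)+2)
        * min ((2:ℝ)^((ℓ:ℝ)+1)) (2*(1 + (2:ℝ)^(((max j k : ℝ)+6-(ℓ:ℝ))/2)))
        * (∑ q ∈ SA, (a q)^2) * (∑ q₂ ∈ SB, (b q₂)^2) := by
  classical
  set XA := ∑ q ∈ SA, (a q)^2 with hXA
  set Y := ∑ q₂ ∈ SB, (b q₂)^2 with hY
  set ν := min ((2:ℝ)^((ℓ:ℝ)+1)) (2*(1 + (2:ℝ)^(((max j k : ℝ)+6-(ℓ:ℝ))/2))) with hν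
  have hν0 : 0 ≤ ν := le_min (by positivity) (by positivity)
  have hY0 : 0 ≤ Y := Finset.sum_nonneg fun q _ => by positivity
  have hXA0 : 0 ≤ XA := Finset.sum_nonneg fun q _ => by positivity
  have key : ∀ p ∈ T, (gf a b SA p)^2
      ≤ (ν * Y * (2:ℝ)^((min j k : ℝ)+2))
        * (∑ n₁ ∈ SA.image Prod.fst, colsq a b SA n₁ p / tht b SB ℓ n₁) := by
    intro p hp
    set N := (SA.image Prod.fst).filter (fun n₁ => colf a b SA n₁ p ≠ 0) with hN
    have hg : gf a b SA p = ∑ n₁ ∈ N, colf a b SA n₁ p := by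
      rw [gf_eq_sum_colf]
      exact (Finset.sum_filter_ne_zero (SA.image Prod.fst)).symm
    have hthtpos : ∀ n₁ ∈ N, 0 < tht b SB ℓ n₁ := by
      intro n₁ hn₁
      have hcol : colf a b SA n₁ p ≠ 0 := (Finset.mem_filter.1 hn₁).2
      obtain ⟨q, hq, hq0⟩ := Finset.exists_ne_zero_of_sum_ne_zero hcol
      have hq1 : q.1 = n₁ := (Finset.mem_filter.1 hq).2
      have hb0 : b (p - q) ≠ 0 := fun h => hq0 (by rw [h, mul_zero])
      have hmem : (p - q) ∈ SB.filter (fun q₂ => slev (q₂.1 + n₁) = ℓ) := by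
        refine Finset.mem_filter.2 ⟨hbS _ hb0, ?_⟩
        have heq : (p - q).1 + n₁ = p.1 := by rw [Prod.fst_sub, hq1]; ring
        rw [heq]; exact hT p hp
      have hsingle : (b (p-q))^2 ≤ tht b SB ℓ n₁ := by
        unfold tht
        exact Finset.single_le_sum (f := fun q₂ => (b q₂)^2) (fun r _ => by positivity) hmem
      have hpos : 0 < (b (p-q))^2 :=
        lt_of_le_of_ne (sq_nonneg _) (Ne.symm (pow_ne_zero 2 hb0))
      linarith
    have hcs : (∑ n₁ ∈ N, colf a b SA n₁ p)^2
        ≤ (∑ n₁ ∈ N, tht b SB ℓ n₁)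
          * (∑ n₁ ∈ N, (colf a b SA n₁ p)^2 / tht b SB ℓ n₁) := by
      have hrw : ∑ n₁ ∈ N, colf a b SA n₁ p
          = ∑ n₁ ∈ N, Real.sqrt (tht b SB ℓ n₁)
              * (colf a b SA n₁ p / Real.sqrt (tht b SB ℓ n₁)) := by
        apply Finset.sum_congr rfl
        intro n₁ hn₁
        have hsne : Real.sqrt (tht b SB ℓ n₁) ≠ 0 :=
          ne_of_gt (Real.sqrt_pos.2 (hthtpos n₁ hn₁))
        rw [← mul_div_assoc, mul_comm, mul_div_assoc, div_self hsne, mul_one]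
      rw [hrw]
      have h2 := Finset.sum_mul_sq_le_sq_mul_sq N
        (fun n₁ => Real.sqrt (tht b SB ℓ n₁))
        (fun n₁ => colf a b SA n₁ p / Real.sqrt (tht b SB ℓ n₁))
      have h3 : ∑ n₁ ∈ N, (Real.sqrt (tht b SB ℓ n₁))^2 = ∑ n₁ ∈ N, tht b SB ℓ n₁ := by
        apply Finset.sum_congr rfl
        intro n₁ _
        exact Real.sq_sqrt (tht_nonneg ℓ n₁)
      have h4 : ∑ n₁ ∈ N, (colf a b SA n₁ p / Real.sqrt (tht b SB ℓ n₁))^2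
          = ∑ n₁ ∈ N, (colf a b SA n₁ p)^2 / tht b SB ℓ n₁ := by
        apply Finset.sum_congr rfl
        intro n₁ _
        rw [div_pow, Real.sq_sqrt (tht_nonneg ℓ n₁)]
      rw [h3, h4] at h2
      exact h2
    have hf1 : ∑ n₁ ∈ N, tht b SB ℓ n₁ ≤ ν * Y := by
      rcases le_total ((2:ℝ)^((ℓ:ℝ)+1)) (2*(1 + (2:ℝ)^(((max j k : ℝ)+6-(ℓ:ℝ))/2))) with h | h
      · rw [hν, min_eq_left h]
        exact tht_sum_le ℓ N
      · rw [hν, min_eq_right h]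
        have hcard : (N.card : ℝ) ≤ 2*(1 + (2:ℝ)^(((max j k : ℝ)+6-(ℓ:ℝ))/2)) := by
          have hc := cand_card (SA := SA) haj hbk p
          rw [hT p hp] at hc
          exact hc
        calc ∑ n₁ ∈ N, tht b SB ℓ n₁ ≤ ∑ _n₁ ∈ N, Y :=
              Finset.sum_le_sum (fun n₁ _ => tht_le_Y ℓ n₁)
          _ = N.card * Y := by rw [Finset.sum_const, nsmul_eq_mul]
          _ ≤ _ := mul_le_mul_of_nonneg_right hcard hY0
    have hf2 : ∑ n₁ ∈ N, (colf a b SA n₁ p)^2 / tht b SB ℓ n₁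
        ≤ (2:ℝ)^((min j k : ℝ)+2)
          * (∑ n₁ ∈ SA.image Prod.fst, colsq a b SA n₁ p / tht b SB ℓ n₁) := by
      calc ∑ n₁ ∈ N, (colf a b SA n₁ p)^2 / tht b SB ℓ n₁
          ≤ ∑ n₁ ∈ N, (2:ℝ)^((min j k : ℝ)+2) * (colsq a b SA n₁ p / tht b SB ℓ n₁) := by
            apply Finset.sum_le_sum
            intro n₁ hn₁
            have hcc := colf_sq_le ha hb haj hbk (SA := SA) n₁ p
            have hdl := (div_le_div_iff_of_pos_right (hthtpos n₁ hn₁)).2 hcc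
            exact le_trans hdl (le_of_eq (mul_div_assoc _ _ _))
        _ = (2:ℝ)^((min j k : ℝ)+2) * ∑ n₁ ∈ N, colsq a b SA n₁ p / tht b SB ℓ n₁ := by
            rw [Finset.mul_sum]
        _ ≤ _ := by
            apply mul_le_mul_of_nonneg_left ?_ (by positivity)
            apply Finset.sum_le_sum_of_subset_of_nonneg (Finset.filter_subset _ _)
            intro n₁ _ _
            exact div_nonneg (colsq_nonneg n₁ p) (tht_nonneg ℓ n₁)
    have hg2nonneg : 0 ≤ ∑ n₁ ∈ N, (colf a b SA n₁ p)^2 / tht b SB ℓ n₁ :=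
      Finset.sum_nonneg fun n₁ _ => div_nonneg (sq_nonneg _) (tht_nonneg ℓ n₁)
    calc (gf a b SA p)^2 = (∑ n₁ ∈ N, colf a b SA n₁ p)^2 := by rw [hg]
      _ ≤ (∑ n₁ ∈ N, tht b SB ℓ n₁) * (∑ n₁ ∈ N, (colf a b SA n₁ p)^2 / tht b SB ℓ n₁) := hcs
      _ ≤ (ν * Y) * ((2:ℝ)^((min j k : ℝ)+2)
            * (∑ n₁ ∈ SA.image Prod.fst, colsq a b SA n₁ p / tht b SB ℓ n₁)) := by
          apply mul_le_mul hf1 hf2 hg2nonneg (mul_nonneg hν0 hY0)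
      _ = _ := by ring
  have hsum : ∑ p ∈ T, (∑ n₁ ∈ SA.image Prod.fst, colsq a b SA n₁ p / tht b SB ℓ n₁) ≤ XA := by
    have hcomm : ∑ p ∈ T, (∑ n₁ ∈ SA.image Prod.fst, colsq a b SA n₁ p / tht b SB ℓ n₁)
        = ∑ n₁ ∈ SA.image Prod.fst, ∑ p ∈ T, colsq a b SA n₁ p / tht b SB ℓ n₁ :=
      Finset.sum_comm
    rw [hcomm]
    have hstep : ∀ n₁ ∈ SA.image Prod.fst,
        ∑ p ∈ T, colsq a b SA n₁ p / tht b SB ℓ n₁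
          ≤ ∑ q ∈ SA.filter (fun q => q.1 = n₁), (a q)^2 := by
      intro n₁ _
      have hdiv : ∑ p ∈ T, colsq a b SA n₁ p / tht b SB ℓ n₁
          = (∑ p ∈ T, colsq a b SA n₁ p) / tht b SB ℓ n₁ := (Finset.sum_div _ _ _).symm
      rw [hdiv]
      have hbound : ∑ p ∈ T, colsq a b SA n₁ p
          ≤ (∑ q ∈ SA.filter (fun q => q.1 = n₁), (a q)^2) * tht b SB ℓ n₁ := by
        have hswap : ∑ p ∈ T, colsq a b SA n₁ p
            = ∑ q ∈ SA.filter (fun q => q.1 = n₁), (a q)^2 * ∑ p ∈ T, (b (p - q))^2 := by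
          unfold colsq
          rw [Finset.sum_comm]
          apply Finset.sum_congr rfl
          intro q _
          rw [Finset.mul_sum]
        rw [hswap, Finset.sum_mul]
        apply Finset.sum_le_sum
        intro q hq
        have hq1 : q.1 = n₁ := (Finset.mem_filter.1 hq).2
        apply mul_le_mul_of_nonneg_left ?_ (by positivity)
        exact sum_b_sq_le_tht hbS ℓ q n₁ hq1 T hT
      rcases (tht_nonneg (b := b) (SB := SB) ℓ n₁).lt_or_eq with hpos | heq0
      · rw [div_le_iff₀ hpos]
        exact hbound
      · rw [← heq0, div_zero]
        positivity
    calc ∑ n₁ ∈ SA.image Prod.fst, ∑ p ∈ T, colsq a b SA n₁ p / tht b SB ℓ n₁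
        ≤ ∑ n₁ ∈ SA.image Prod.fst, ∑ q ∈ SA.filter (fun q => q.1 = n₁), (a q)^2 :=
          Finset.sum_le_sum hstep
      _ = XA := by
          rw [hXA]
          exact Finset.sum_fiberwise_of_maps_to (fun q hq => Finset.mem_image_of_mem Prod.fst hq) _
  calc ∑ p ∈ T, (gf a b SA p)^2
      ≤ ∑ p ∈ T, (ν * Y * (2:ℝ)^((min j k : ℝ)+2))
          * (∑ n₁ ∈ SA.image Prod.fst, colsq a b SA n₁ p / tht b SB ℓ n₁) :=
        Finset.sum_le_sum key
    _ = (ν * Y * (2:ℝ)^((min j k : ℝ)+2))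
          * ∑ p ∈ T, (∑ n₁ ∈ SA.image Prod.fst, colsq a b SA n₁ p / tht b SB ℓ n₁) :=
        (Finset.mul_sum _ _ _).symm
    _ ≤ (ν * Y * (2:ℝ)^((min j k : ℝ)+2)) * XA := by
        apply mul_le_mul_of_nonneg_left hsum
        positivity
    _ = _ := by ring

lemma rpow_three : (2:ℝ)^(3:ℝ) = 8 := by
  rw [show (3:ℝ) = ((3:ℕ):ℝ) by norm_num, Real.rpow_natCast]
  norm_num

lemma tail_bound
    (ha : ∀ q, 0 ≤ a q) (hb : ∀ q, 0 ≤ b q)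
    (hbS : ∀ r, b r ≠ 0 → r ∈ SB)
    (haj : ∀ q, a q ≠ 0 → lev q = j) (hbk : ∀ q, b q ≠ 0 → lev q = k)
    (T : Finset (ℤ×ℤ)) (hT : ∀ p ∈ T, max j k ≤ slev p.1) :
    ∑ p ∈ T, (gf a b SA p)^2
      ≤ (2:ℝ)^((min j k : ℝ)+2) * (2:ℝ)^(5:ℝ)
        * (∑ q ∈ SA, (a q)^2) * (∑ q₂ ∈ SB, (b q₂)^2) := by
  classical
  have hY0 : (0:ℝ) ≤ ∑ q₂ ∈ SB, (b q₂)^2 := Finset.sum_nonneg fun q _ => by positivity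
  have key : ∀ p ∈ T, (gf a b SA p)^2
      ≤ (2:ℝ)^(5:ℝ) * ((2:ℝ)^((min j k : ℝ)+2)
          * ∑ n₁ ∈ SA.image Prod.fst, colsq a b SA n₁ p) := by
    intro p hp
    set N := (SA.image Prod.fst).filter (fun n₁ => colf a b SA n₁ p ≠ 0) with hN
    have hg : gf a b SA p = ∑ n₁ ∈ N, colf a b SA n₁ p := by
      rw [gf_eq_sum_colf]
      exact (Finset.sum_filter_ne_zero (SA.image Prod.fst)).symm
    have hcard : (N.card : ℝ) ≤ (2:ℝ)^(5:ℝ) := by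
      have hc := cand_card (SA := SA) haj hbk p
      have hslev : (max j k : ℝ) ≤ (slev p.1 : ℝ) := by exact_mod_cast hT p hp
      have hexp : ((max j k : ℝ) + 6 - (slev p.1 : ℝ))/2 ≤ 3 := by
        have hmm : ((max j k : ℕ) : ℝ) = max (j:ℝ) (k:ℝ) := by
          push_cast; rfl
        linarith
      have h8 : (2:ℝ)^(((max j k : ℝ) + 6 - (slev p.1 : ℝ))/2) ≤ 8 := by
        calc (2:ℝ)^(((max j k : ℝ) + 6 - (slev p.1 : ℝ))/2) ≤ (2:ℝ)^(3:ℝ) :=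
              Real.rpow_le_rpow_of_exponent_le (by norm_num) hexp
          _ = 8 := rpow_three
      have h32 : (2:ℝ)^(5:ℝ) = 32 := by
        rw [show (5:ℝ) = ((5:ℕ):ℝ) by norm_num, Real.rpow_natCast]
        norm_num
      rw [h32]
      calc (N.card : ℝ) ≤ 2*(1 + (2:ℝ)^(((max j k : ℝ) + 6 - (slev p.1 : ℝ))/2)) := hc
        _ ≤ 2*(1+8) := by linarith
        _ ≤ 32 := by norm_num
    have hcs : (∑ n₁ ∈ N, colf a b SA n₁ p)^2 ≤ (N.card : ℝ) * ∑ n₁ ∈ N, (colf a b SA n₁ p)^2 :=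
      sq_sum_le_card N _
    have hcolsq : ∑ n₁ ∈ N, (colf a b SA n₁ p)^2
        ≤ (2:ℝ)^((min j k : ℝ)+2) * ∑ n₁ ∈ SA.image Prod.fst, colsq a b SA n₁ p := by
      calc ∑ n₁ ∈ N, (colf a b SA n₁ p)^2
          ≤ ∑ n₁ ∈ N, (2:ℝ)^((min j k : ℝ)+2) * colsq a b SA n₁ p :=
            Finset.sum_le_sum fun n₁ _ => colf_sq_le ha hb haj hbk n₁ p
        _ = (2:ℝ)^((min j k : ℝ)+2) * ∑ n₁ ∈ N, colsq a b SA n₁ p :=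
            (Finset.mul_sum _ _ _).symm
        _ ≤ _ := by
            apply mul_le_mul_of_nonneg_left ?_ (by positivity)
            apply Finset.sum_le_sum_of_subset_of_nonneg (Finset.filter_subset _ _)
            intro n₁ _ _
            exact colsq_nonneg n₁ p
    calc (gf a b SA p)^2 = (∑ n₁ ∈ N, colf a b SA n₁ p)^2 := by rw [hg]
      _ ≤ (N.card : ℝ) * ∑ n₁ ∈ N, (colf a b SA n₁ p)^2 := hcs
      _ ≤ (2:ℝ)^(5:ℝ) * ((2:ℝ)^((min j k : ℝ)+2) * ∑ n₁ ∈ SA.image Prod.fst, colsq a b SA n₁ p) :=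
          mul_le_mul hcard hcolsq (Finset.sum_nonneg fun n₁ _ => sq_nonneg _) (by positivity)
  have hsum : ∑ p ∈ T, (∑ n₁ ∈ SA.image Prod.fst, colsq a b SA n₁ p)
      ≤ (∑ q ∈ SA, (a q)^2) * (∑ q₂ ∈ SB, (b q₂)^2) := by
    have hcomm : ∑ p ∈ T, (∑ n₁ ∈ SA.image Prod.fst, colsq a b SA n₁ p)
        = ∑ n₁ ∈ SA.image Prod.fst, ∑ p ∈ T, colsq a b SA n₁ p := Finset.sum_comm
    rw [hcomm]
    have hstep : ∀ n₁ ∈ SA.image Prod.fst,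
        ∑ p ∈ T, colsq a b SA n₁ p
          ≤ (∑ q ∈ SA.filter (fun q => q.1 = n₁), (a q)^2) * (∑ q₂ ∈ SB, (b q₂)^2) := by
      intro n₁ _
      have hswap : ∑ p ∈ T, colsq a b SA n₁ p
          = ∑ q ∈ SA.filter (fun q => q.1 = n₁), (a q)^2 * ∑ p ∈ T, (b (p - q))^2 := by
        unfold colsq
        rw [Finset.sum_comm]
        apply Finset.sum_congr rfl
        intro q _
        rw [Finset.mul_sum]
      rw [hswap, Finset.sum_mul]
      apply Finset.sum_le_sum
      intro q _
      apply mul_le_mul_of_nonneg_left ?_ (by positivity)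
      exact sum_b_sq_le_Y hbS q T
    calc ∑ n₁ ∈ SA.image Prod.fst, ∑ p ∈ T, colsq a b SA n₁ p
        ≤ ∑ n₁ ∈ SA.image Prod.fst,
            (∑ q ∈ SA.filter (fun q => q.1 = n₁), (a q)^2) * (∑ q₂ ∈ SB, (b q₂)^2) :=
          Finset.sum_le_sum hstep
      _ = (∑ n₁ ∈ SA.image Prod.fst, ∑ q ∈ SA.filter (fun q => q.1 = n₁), (a q)^2)
            * (∑ q₂ ∈ SB, (b q₂)^2) := (Finset.sum_mul _ _ _).symm
      _ = _ := by
          rw [Finset.sum_fiberwise_of_maps_to (fun q hq => Finset.mem_image_of_mem Prod.fst hq)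
            (fun q => (a q)^2)]
  calc ∑ p ∈ T, (gf a b SA p)^2
      ≤ ∑ p ∈ T, (2:ℝ)^(5:ℝ) * ((2:ℝ)^((min j k : ℝ)+2)
          * ∑ n₁ ∈ SA.image Prod.fst, colsq a b SA n₁ p) := Finset.sum_le_sum key
    _ = ((2:ℝ)^(5:ℝ) * (2:ℝ)^((min j k : ℝ)+2))
          * ∑ p ∈ T, (∑ n₁ ∈ SA.image Prod.fst, colsq a b SA n₁ p) := by
        rw [Finset.mul_sum]
        apply Finset.sum_congr rfl
        intro p _
        ring
    _ ≤ ((2:ℝ)^(5:ℝ) * (2:ℝ)^((min j k : ℝ)+2))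
          * ((∑ q ∈ SA, (a q)^2) * (∑ q₂ ∈ SB, (b q₂)^2)) := by
        apply mul_le_mul_of_nonneg_left hsum
        positivity
    _ = _ := by ring

lemma geom_two_real (N : ℕ) : ∑ ℓ ∈ Finset.range N, (2:ℝ)^(ℓ:ℕ) = 2^(N:ℕ) - 1 := by
  rw [geom_sum_eq (by norm_num : (2:ℝ) ≠ 1) N]
  norm_num

lemma nu_sum (m : ℕ) :
    ∑ ℓ ∈ Finset.range m, min ((2:ℝ)^((ℓ:ℝ)+1)) (2*(1 + (2:ℝ)^(((m:ℝ)+6-(ℓ:ℝ))/2)))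
      ≤ (2:ℝ)^(8:ℝ) * (2:ℝ)^((m:ℝ)/3) := by
  classical
  set ℓ₀ := m / 3 with hℓ₀
  have hl3 : 3 * ℓ₀ ≤ m := by omega
  have hl3' : m ≤ 3 * ℓ₀ + 2 := by omega
  have hcast1 : (ℓ₀ : ℝ) ≤ (m:ℝ)/3 := by
    have : (3:ℝ) * (ℓ₀:ℝ) ≤ (m:ℝ) := by exact_mod_cast hl3
    linarith
  have hcast2 : (m:ℝ) - 2 ≤ 3 * (ℓ₀:ℝ) := by
    have : (m:ℝ) ≤ 3*(ℓ₀:ℝ) + 2 := by exact_mod_cast hl3'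
    linarith
  rw [← Finset.sum_filter_add_sum_filter_not (Finset.range m) (fun ℓ => ℓ ≤ ℓ₀)]
  have hpart1 : ∑ ℓ ∈ (Finset.range m).filter (fun ℓ => ℓ ≤ ℓ₀),
      min ((2:ℝ)^((ℓ:ℝ)+1)) (2*(1 + (2:ℝ)^(((m:ℝ)+6-(ℓ:ℝ))/2)))
      ≤ 4 * (2:ℝ)^((m:ℝ)/3) := by
    calc ∑ ℓ ∈ (Finset.range m).filter (fun ℓ => ℓ ≤ ℓ₀),
          min ((2:ℝ)^((ℓ:ℝ)+1)) (2*(1 + (2:ℝ)^(((m:ℝ)+6-(ℓ:ℝ))/2)))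
        ≤ ∑ ℓ ∈ (Finset.range m).filter (fun ℓ => ℓ ≤ ℓ₀), (2:ℝ)^((ℓ:ℝ)+1) :=
          Finset.sum_le_sum fun ℓ _ => min_le_left _ _
      _ ≤ ∑ ℓ ∈ Finset.range (ℓ₀+1), (2:ℝ)^((ℓ:ℝ)+1) := by
          apply Finset.sum_le_sum_of_subset_of_nonneg
          · intro ℓ hℓ
            have := (Finset.mem_filter.1 hℓ).2
            simp only [Finset.mem_range]
            omega
          · intro ℓ _ _; positivity
      _ = ∑ ℓ ∈ Finset.range (ℓ₀+1), 2 * (2:ℝ)^(ℓ:ℕ) := by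
          apply Finset.sum_congr rfl
          intro ℓ _
          rw [Real.rpow_add (by norm_num : (0:ℝ) < 2), Real.rpow_one, Real.rpow_natCast]
          ring
      _ = 2 * ((2:ℝ)^(ℓ₀+1 : ℕ) - 1) := by
          rw [← Finset.mul_sum, geom_two_real]
      _ ≤ 4 * (2:ℝ)^(ℓ₀ : ℕ) := by
          have : (2:ℝ)^(ℓ₀+1:ℕ) = 2 * 2^(ℓ₀:ℕ) := by ring
          rw [this]; nlinarith [pow_pos (show (0:ℝ) < 2 by norm_num) ℓ₀]
      _ ≤ 4 * (2:ℝ)^((m:ℝ)/3) := by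
          apply mul_le_mul_of_nonneg_left ?_ (by norm_num)
          rw [← Real.rpow_natCast 2 ℓ₀]
          exact Real.rpow_le_rpow_of_exponent_le (by norm_num) hcast1
  have hpart2 : ∑ ℓ ∈ (Finset.range m).filter (fun ℓ => ¬ ℓ ≤ ℓ₀),
      min ((2:ℝ)^((ℓ:ℝ)+1)) (2*(1 + (2:ℝ)^(((m:ℝ)+6-(ℓ:ℝ))/2)))
      ≤ (2:ℝ)^(7:ℝ) * (2:ℝ)^((m:ℝ)/3) := by
    have hterm : ∀ ℓ ∈ (Finset.range m).filter (fun ℓ => ¬ ℓ ≤ ℓ₀),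
        min ((2:ℝ)^((ℓ:ℝ)+1)) (2*(1 + (2:ℝ)^(((m:ℝ)+6-(ℓ:ℝ))/2)))
          ≤ 4 * (2:ℝ)^(((m:ℝ)+6-(ℓ:ℝ))/2) := by
      intro ℓ hℓ
      have hlm : ℓ < m := Finset.mem_range.1 (Finset.mem_filter.1 hℓ).1
      have hone : (1:ℝ) ≤ (2:ℝ)^(((m:ℝ)+6-(ℓ:ℝ))/2) := by
        rw [show (1:ℝ) = (2:ℝ)^(0:ℝ) by rw [Real.rpow_zero]]
        apply Real.rpow_le_rpow_of_exponent_le (by norm_num)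
        have : (ℓ:ℝ) + 1 ≤ (m:ℝ) := by exact_mod_cast hlm
        linarith
      calc min ((2:ℝ)^((ℓ:ℝ)+1)) (2*(1 + (2:ℝ)^(((m:ℝ)+6-(ℓ:ℝ))/2)))
          ≤ 2*(1 + (2:ℝ)^(((m:ℝ)+6-(ℓ:ℝ))/2)) := min_le_right _ _
        _ ≤ 4 * (2:ℝ)^(((m:ℝ)+6-(ℓ:ℝ))/2) := by linarith
    calc ∑ ℓ ∈ (Finset.range m).filter (fun ℓ => ¬ ℓ ≤ ℓ₀),
          min ((2:ℝ)^((ℓ:ℝ)+1)) (2*(1 + (2:ℝ)^(((m:ℝ)+6-(ℓ:ℝ))/2)))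
        ≤ ∑ ℓ ∈ (Finset.range m).filter (fun ℓ => ¬ ℓ ≤ ℓ₀), 4 * (2:ℝ)^(((m:ℝ)+6-(ℓ:ℝ))/2) :=
          Finset.sum_le_sum hterm
      _ ≤ ∑ ℓ ∈ Finset.Ico (ℓ₀+1) m, 4 * (2:ℝ)^(((m:ℝ)+6-(ℓ:ℝ))/2) := by
          apply Finset.sum_le_sum_of_subset_of_nonneg
          · intro ℓ hℓ
            have h1 := Finset.mem_range.1 (Finset.mem_filter.1 hℓ).1
            have h2 := (Finset.mem_filter.1 hℓ).2
            rw [Finset.mem_Ico]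
            omega
          · intro ℓ _ _; positivity
      _ = ∑ i ∈ Finset.range (m - (ℓ₀+1)), 4 * (2:ℝ)^(((m:ℝ)+6-((ℓ₀+1+i : ℕ):ℝ))/2) := by
          rw [Finset.sum_Ico_eq_sum_range]
      _ ≤ (2:ℝ)^(7:ℝ) * (2:ℝ)^((m:ℝ)/3) := by
          have hsplit : ∀ i : ℕ, (2:ℝ)^(((m:ℝ)+6-((ℓ₀+1+i : ℕ):ℝ))/2)
              = (2:ℝ)^(((m:ℝ)+5-(ℓ₀:ℝ))/2) * ((2:ℝ)^(-(1/2):ℝ))^i := by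
            intro i
            rw [← rpow_nat_div 2 i, ← Real.rpow_add (by norm_num : (0:ℝ) < 2)]
            congr 1
            push_cast
            ring
          have hsum2 : ∑ i ∈ Finset.range (m - (ℓ₀+1)), 4 * (2:ℝ)^(((m:ℝ)+6-((ℓ₀+1+i : ℕ):ℝ))/2)
              = 4 * (2:ℝ)^(((m:ℝ)+5-(ℓ₀:ℝ))/2)
                * ∑ i ∈ Finset.range (m - (ℓ₀+1)), ((2:ℝ)^(-(1/2):ℝ))^i := by
            rw [Finset.mul_sum]
            apply Finset.sum_congr rfl
            intro i _
            rw [hsplit i]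
            ring
          rw [hsum2]
          have hgeo : ∑ i ∈ Finset.range (m - (ℓ₀+1)), ((2:ℝ)^(-(1/2):ℝ))^i ≤ 4 := by
            calc ∑ i ∈ Finset.range (m - (ℓ₀+1)), ((2:ℝ)^(-(1/2):ℝ))^i
                ≤ 1/(1 - (2:ℝ)^(-(1/2):ℝ)) :=
                  geom_bound _ (by positivity) (lt_of_le_of_lt r2_le (by norm_num)) _
              _ ≤ 4 := by
                  rw [div_le_iff₀ (by linarith [r2_le])]
                  linarith [r2_le]
          have hE0 : (2:ℝ)^(((m:ℝ)+5-(ℓ₀:ℝ))/2) ≤ 8 * (2:ℝ)^((m:ℝ)/3) := by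
            have hexp : ((m:ℝ)+5-(ℓ₀:ℝ))/2 ≤ (m:ℝ)/3 + 3 := by
              linarith
            calc (2:ℝ)^(((m:ℝ)+5-(ℓ₀:ℝ))/2) ≤ (2:ℝ)^((m:ℝ)/3 + 3) :=
                  Real.rpow_le_rpow_of_exponent_le (by norm_num) hexp
              _ = 8 * (2:ℝ)^((m:ℝ)/3) := by
                  rw [Real.rpow_add (by norm_num : (0:ℝ) < 2), rpow_three]
                  ring
          have h128 : (2:ℝ)^(7:ℝ) = 128 := by
            rw [show (7:ℝ) = ((7:ℕ):ℝ) by norm_num, Real.rpow_natCast]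
            norm_num
          have hrp0 : (0:ℝ) ≤ (2:ℝ)^(((m:ℝ)+5-(ℓ₀:ℝ))/2) := by positivity
          have hsge0 : (0:ℝ) ≤ ∑ i ∈ Finset.range (m - (ℓ₀+1)), ((2:ℝ)^(-(1/2):ℝ))^i :=
            Finset.sum_nonneg fun i _ => by positivity
          calc 4 * (2:ℝ)^(((m:ℝ)+5-(ℓ₀:ℝ))/2) * ∑ i ∈ Finset.range (m - (ℓ₀+1)), ((2:ℝ)^(-(1/2):ℝ))^i
              ≤ 4 * (2:ℝ)^(((m:ℝ)+5-(ℓ₀:ℝ))/2) * 4 := by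
                apply mul_le_mul_of_nonneg_left hgeo (by positivity)
            _ = 16 * (2:ℝ)^(((m:ℝ)+5-(ℓ₀:ℝ))/2) := by ring
            _ ≤ 16 * (8 * (2:ℝ)^((m:ℝ)/3)) := by
                apply mul_le_mul_of_nonneg_left hE0 (by norm_num)
            _ = (2:ℝ)^(7:ℝ) * (2:ℝ)^((m:ℝ)/3) := by rw [h128]; ring
  have h256 : (2:ℝ)^(8:ℝ) = 256 := by
    rw [show (8:ℝ) = ((8:ℕ):ℝ) by norm_num, Real.rpow_natCast]
    norm_num
  have h128 : (2:ℝ)^(7:ℝ) = 128 := by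
    rw [show (7:ℝ) = ((7:ℕ):ℝ) by norm_num, Real.rpow_natCast]
    norm_num
  have hrp : (0:ℝ) ≤ (2:ℝ)^((m:ℝ)/3) := by positivity
  rw [h256]
  rw [h128] at hpart2
  linarith

lemma one_le_rpow_max (j k : ℕ) : (1:ℝ) ≤ (2:ℝ)^((max (j:ℝ) (k:ℝ))/3) := by
  rw [show (1:ℝ) = (2:ℝ)^(0:ℝ) by rw [Real.rpow_zero]]
  apply Real.rpow_le_rpow_of_exponent_le (by norm_num)
  have : (0:ℝ) ≤ (j:ℝ) := by positivity
  have : (0:ℝ) ≤ max (j:ℝ) (k:ℝ) := le_trans this (le_max_left _ _)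
  linarith

lemma core_g
    (ha : ∀ q, 0 ≤ a q) (hb : ∀ q, 0 ≤ b q)
    (hbS : ∀ r, b r ≠ 0 → r ∈ SB)
    (haj : ∀ q, a q ≠ 0 → lev q = j) (hbk : ∀ q, b q ≠ 0 → lev q = k)
    (S : Finset (ℤ×ℤ)) :
    ∑ p ∈ S, (gf a b SA p)^2
      ≤ (2:ℝ)^((min j k : ℝ)+2) * ((2:ℝ)^(9:ℝ) * (2:ℝ)^((max j k : ℝ)/3))
        * (∑ q ∈ SA, (a q)^2) * (∑ q₂ ∈ SB, (b q₂)^2) := by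
  classical
  set m := max j k with hm
  have hcast : ((m:ℕ):ℝ) = max (j:ℝ) (k:ℝ) := by
    rw [hm]; push_cast; rfl
  set XA := ∑ q ∈ SA, (a q)^2 with hXA
  set Y := ∑ q₂ ∈ SB, (b q₂)^2 with hY
  have hXA0 : 0 ≤ XA := Finset.sum_nonneg fun q _ => by positivity
  have hY0 : 0 ≤ Y := Finset.sum_nonneg fun q _ => by positivity
  rw [← Finset.sum_filter_add_sum_filter_not S (fun p => slev p.1 < m)]
  have hhead : ∑ p ∈ S.filter (fun p => slev p.1 < m), (gf a b SA p)^2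
      ≤ (2:ℝ)^((min j k : ℝ)+2) * ((2:ℝ)^(8:ℝ) * (2:ℝ)^((max j k : ℝ)/3)) * XA * Y := by
    have hfib : ∑ p ∈ S.filter (fun p => slev p.1 < m), (gf a b SA p)^2
        = ∑ ℓ ∈ Finset.range m, ∑ p ∈ (S.filter (fun p => slev p.1 < m)).filter
            (fun p => slev p.1 = ℓ), (gf a b SA p)^2 := by
      exact (Finset.sum_fiberwise_of_maps_to
        (fun p hp => Finset.mem_range.2 (Finset.mem_filter.1 hp).2) _).symm
    rw [hfib]
    have hshell : ∀ ℓ ∈ Finset.range m,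
        ∑ p ∈ (S.filter (fun p => slev p.1 < m)).filter (fun p => slev p.1 = ℓ),
          (gf a b SA p)^2
        ≤ (2:ℝ)^((min j k : ℝ)+2)
          * min ((2:ℝ)^((ℓ:ℝ)+1)) (2*(1 + (2:ℝ)^(((max j k : ℝ)+6-(ℓ:ℝ))/2)))
          * XA * Y := by
      intro ℓ _
      exact shell_bound ha hb hbS haj hbk ℓ _
        (fun p hp => (Finset.mem_filter.1 hp).2)
    calc ∑ ℓ ∈ Finset.range m, ∑ p ∈ (S.filter (fun p => slev p.1 < m)).filter
            (fun p => slev p.1 = ℓ), (gf a b SA p)^2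
        ≤ ∑ ℓ ∈ Finset.range m, (2:ℝ)^((min j k : ℝ)+2)
            * min ((2:ℝ)^((ℓ:ℝ)+1)) (2*(1 + (2:ℝ)^(((max j k : ℝ)+6-(ℓ:ℝ))/2)))
            * XA * Y := Finset.sum_le_sum hshell
      _ = ((2:ℝ)^((min j k : ℝ)+2) * XA * Y)
            * ∑ ℓ ∈ Finset.range m,
              min ((2:ℝ)^((ℓ:ℝ)+1)) (2*(1 + (2:ℝ)^(((max j k : ℝ)+6-(ℓ:ℝ))/2))) := by
          rw [Finset.mul_sum]
          apply Finset.sum_congr rfl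
          intro ℓ _
          ring
      _ ≤ ((2:ℝ)^((min j k : ℝ)+2) * XA * Y) * ((2:ℝ)^(8:ℝ) * (2:ℝ)^((max j k : ℝ)/3)) := by
          apply mul_le_mul_of_nonneg_left ?_ (by positivity)
          have hnu := nu_sum m
          rw [hcast] at hnu
          exact hnu
      _ = _ := by ring
  have htail : ∑ p ∈ S.filter (fun p => ¬ slev p.1 < m), (gf a b SA p)^2
      ≤ (2:ℝ)^((min j k : ℝ)+2) * ((2:ℝ)^(5:ℝ) * (2:ℝ)^((max j k : ℝ)/3)) * XA * Y := by
    have ht := tail_bound (SA := SA) ha hb hbS haj hbk (S.filter (fun p => ¬ slev p.1 < m))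
      (fun p hp => by
        have := (Finset.mem_filter.1 hp).2
        omega)
    calc ∑ p ∈ S.filter (fun p => ¬ slev p.1 < m), (gf a b SA p)^2
        ≤ (2:ℝ)^((min j k : ℝ)+2) * (2:ℝ)^(5:ℝ) * XA * Y := ht
      _ ≤ (2:ℝ)^((min j k : ℝ)+2) * ((2:ℝ)^(5:ℝ) * (2:ℝ)^((max j k : ℝ)/3)) * XA * Y := by
          have h1 := one_le_rpow_max j k
          have hp1 : (0:ℝ) ≤ (2:ℝ)^((min j k : ℝ)+2) * (2:ℝ)^(5:ℝ) * XA * Y := by positivity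
          nlinarith [mul_nonneg (mul_nonneg (by positivity : (0:ℝ) ≤ (2:ℝ)^((min j k : ℝ)+2) * (2:ℝ)^(5:ℝ)) hXA0) hY0]
  have h85 : (2:ℝ)^(8:ℝ) + (2:ℝ)^(5:ℝ) ≤ (2:ℝ)^(9:ℝ) := by
    rw [show (8:ℝ) = ((8:ℕ):ℝ) by norm_num, show (5:ℝ) = ((5:ℕ):ℝ) by norm_num,
      show (9:ℝ) = ((9:ℕ):ℝ) by norm_num, Real.rpow_natCast, Real.rpow_natCast,
      Real.rpow_natCast]
    norm_num
  have hfinal : (2:ℝ)^((min j k : ℝ)+2) * ((2:ℝ)^(8:ℝ) * (2:ℝ)^((max j k : ℝ)/3)) * XA * Y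
      + (2:ℝ)^((min j k : ℝ)+2) * ((2:ℝ)^(5:ℝ) * (2:ℝ)^((max j k : ℝ)/3)) * XA * Y
      ≤ (2:ℝ)^((min j k : ℝ)+2) * ((2:ℝ)^(9:ℝ) * (2:ℝ)^((max j k : ℝ)/3)) * XA * Y := by
    have hc : (0:ℝ) ≤ (2:ℝ)^((min j k : ℝ)+2) * (2:ℝ)^((max j k : ℝ)/3) * (XA * Y) := by
      positivity
    nlinarith [h85, hc]
  linarith

def ff (a b : ℤ×ℤ → ℝ) (SA : Finset (ℤ×ℤ)) (p : ℤ×ℤ) : ℝ :=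
  ∑ q ∈ SA, a q * b (p - q) * (jap (sig q))^(-(1/3) : ℝ) * (jap (sig (p - q)))^(-(1/3) : ℝ)

lemma ff_nonneg (ha : ∀ q, 0 ≤ a q) (hb : ∀ q, 0 ≤ b q) (p : ℤ×ℤ) : 0 ≤ ff a b SA p := by
  apply Finset.sum_nonneg
  intro q _
  have h1 := ha q
  have h2 := hb (p - q)
  have h3 : (0:ℝ) ≤ (jap (sig q))^(-(1/3) : ℝ) := Real.rpow_nonneg (jap_pos _).le _
  have h4 : (0:ℝ) ≤ (jap (sig (p-q)))^(-(1/3) : ℝ) := Real.rpow_nonneg (jap_pos _).le _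
  positivity

lemma weight_le (q : ℤ×ℤ) (m : ℕ) (h : lev q = m) :
    (jap (sig q))^(-(1/3) : ℝ) ≤ (2:ℝ)^(-(m:ℝ)/3) := by
  have h1 : (2:ℝ)^((m:ℝ)) ≤ jap (sig q) := by
    have := le_of_lev q
    rwa [h] at this
  have h2 : (0:ℝ) < (2:ℝ)^((m:ℝ)) := by positivity
  calc (jap (sig q))^(-(1/3) : ℝ) ≤ ((2:ℝ)^((m:ℝ)))^(-(1/3) : ℝ) :=
        Real.rpow_le_rpow_of_nonpos h2 h1 (by norm_num)
    _ = (2:ℝ)^(-(m:ℝ)/3) := by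
        rw [← Real.rpow_mul (by norm_num : (0:ℝ) ≤ 2)]
        congr 1; ring

lemma ff_le_gf (ha : ∀ q, 0 ≤ a q) (hb : ∀ q, 0 ≤ b q)
    (haj : ∀ q, a q ≠ 0 → lev q = j) (hbk : ∀ q, b q ≠ 0 → lev q = k) (p : ℤ×ℤ) :
    ff a b SA p ≤ (2:ℝ)^(-(j:ℝ)/3) * (2:ℝ)^(-(k:ℝ)/3) * gf a b SA p := by
  unfold ff gf
  rw [Finset.mul_sum]
  apply Finset.sum_le_sum
  intro q _
  rcases eq_or_ne (a q * b (p - q)) 0 with h0 | h0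
  · rw [show a q * b (p-q) * (jap (sig q))^(-(1/3) : ℝ) * (jap (sig (p - q)))^(-(1/3) : ℝ)
        = (a q * b (p-q)) * ((jap (sig q))^(-(1/3) : ℝ) * (jap (sig (p - q)))^(-(1/3) : ℝ)) by ring,
      h0, zero_mul, mul_zero]
  · have ha0 : a q ≠ 0 := fun h => h0 (by rw [h, zero_mul])
    have hb0 : b (p - q) ≠ 0 := fun h => h0 (by rw [h, mul_zero])
    have hw1 := weight_le q j (haj q ha0)
    have hw2 := weight_le (p - q) k (hbk _ hb0)
    have hab : (0:ℝ) ≤ a q * b (p - q) := mul_nonneg (ha q) (hb _)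
    have hW1 : (0:ℝ) ≤ (jap (sig q))^(-(1/3) : ℝ) := Real.rpow_nonneg (jap_pos _).le _
    have hW2pos : (0:ℝ) ≤ (jap (sig (p - q)))^(-(1/3) : ℝ) := Real.rpow_nonneg (jap_pos _).le _
    calc a q * b (p-q) * (jap (sig q))^(-(1/3) : ℝ) * (jap (sig (p - q)))^(-(1/3) : ℝ)
        = (a q * b (p-q)) * ((jap (sig q))^(-(1/3) : ℝ) * (jap (sig (p - q)))^(-(1/3) : ℝ)) := by
          ring
      _ ≤ (a q * b (p-q)) * ((2:ℝ)^(-(j:ℝ)/3) * (2:ℝ)^(-(k:ℝ)/3)) := by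
          apply mul_le_mul_of_nonneg_left ?_ hab
          exact mul_le_mul hw1 hw2 hW2pos (by positivity)
      _ = (2:ℝ)^(-(j:ℝ)/3) * (2:ℝ)^(-(k:ℝ)/3) * (a q * b (p-q)) := by ring

lemma core_f (ha : ∀ q, 0 ≤ a q) (hb : ∀ q, 0 ≤ b q)
    (hbS : ∀ r, b r ≠ 0 → r ∈ SB)
    (haj : ∀ q, a q ≠ 0 → lev q = j) (hbk : ∀ q, b q ≠ 0 → lev q = k)
    (S : Finset (ℤ×ℤ)) :
    ∑ p ∈ S, (ff a b SA p)^2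
      ≤ (2:ℝ)^(12:ℝ) * (2:ℝ)^(-(|(j:ℝ) - (k:ℝ)|)/3)
        * (∑ q ∈ SA, (a q)^2) * (∑ q₂ ∈ SB, (b q₂)^2) := by
  classical
  set XA := ∑ q ∈ SA, (a q)^2 with hXA
  set Y := ∑ q₂ ∈ SB, (b q₂)^2 with hY
  have hXA0 : 0 ≤ XA := Finset.sum_nonneg fun q _ => by positivity
  have hY0 : 0 ≤ Y := Finset.sum_nonneg fun q _ => by positivity
  have hgf0 : ∀ p, 0 ≤ gf a b SA p :=
    fun p => Finset.sum_nonneg fun q _ => mul_nonneg (ha q) (hb _)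
  have h1 : ∀ p, (ff a b SA p)^2
      ≤ ((2:ℝ)^(-(j:ℝ)/3) * (2:ℝ)^(-(k:ℝ)/3))^2 * (gf a b SA p)^2 := by
    intro p
    have hle := ff_le_gf (SA := SA) ha hb haj hbk p
    have hffn := ff_nonneg (SA := SA) ha hb p
    calc (ff a b SA p)^2 ≤ ((2:ℝ)^(-(j:ℝ)/3) * (2:ℝ)^(-(k:ℝ)/3) * gf a b SA p)^2 := by
          apply pow_le_pow_left₀ hffn hle
      _ = ((2:ℝ)^(-(j:ℝ)/3) * (2:ℝ)^(-(k:ℝ)/3))^2 * (gf a b SA p)^2 := by ring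
  have h2 : ∑ p ∈ S, (ff a b SA p)^2
      ≤ ((2:ℝ)^(-(j:ℝ)/3) * (2:ℝ)^(-(k:ℝ)/3))^2 * ∑ p ∈ S, (gf a b SA p)^2 := by
    rw [Finset.mul_sum]
    exact Finset.sum_le_sum fun p _ => h1 p
  have h3 := core_g (SA := SA) ha hb hbS haj hbk S
  have hc0 : (0:ℝ) ≤ ((2:ℝ)^(-(j:ℝ)/3) * (2:ℝ)^(-(k:ℝ)/3))^2 := by positivity
  have h4 : ∑ p ∈ S, (ff a b SA p)^2
      ≤ ((2:ℝ)^(-(j:ℝ)/3) * (2:ℝ)^(-(k:ℝ)/3))^2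
        * ((2:ℝ)^((min j k : ℝ)+2) * ((2:ℝ)^(9:ℝ) * (2:ℝ)^((max j k : ℝ)/3)) * XA * Y) := by
    calc ∑ p ∈ S, (ff a b SA p)^2 ≤ _ := h2
      _ ≤ _ := mul_le_mul_of_nonneg_left h3 hc0
  -- collect the powers of two
  have hcollect : ((2:ℝ)^(-(j:ℝ)/3) * (2:ℝ)^(-(k:ℝ)/3))^2
      * ((2:ℝ)^((min j k : ℝ)+2) * ((2:ℝ)^(9:ℝ) * (2:ℝ)^((max j k : ℝ)/3)))
      = (2:ℝ)^(-(2*(j:ℝ))/3 + -(2*(k:ℝ))/3 + ((min (j:ℝ) (k:ℝ))+2) + 9 + (max (j:ℝ) (k:ℝ))/3) := by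
    rw [← Real.rpow_add (by norm_num : (0:ℝ) < 2)]
    rw [← Real.rpow_natCast ((2:ℝ)^(-(j:ℝ)/3 + -(k:ℝ)/3)) 2,
      ← Real.rpow_mul (by norm_num : (0:ℝ) ≤ 2)]
    rw [← Real.rpow_add (by norm_num : (0:ℝ) < 2), ← Real.rpow_add (by norm_num : (0:ℝ) < 2),
      ← Real.rpow_add (by norm_num : (0:ℝ) < 2)]
    congr 1
    push_cast
    ring
  have hexp : -(2*(j:ℝ))/3 + -(2*(k:ℝ))/3 + ((min (j:ℝ) (k:ℝ))+2) + 9 + (max (j:ℝ) (k:ℝ))/3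
      ≤ 12 + -(|(j:ℝ) - (k:ℝ)|)/3 := by
    rcases le_total j k with h | h
    · have hjk : (j:ℝ) ≤ (k:ℝ) := by exact_mod_cast h
      rw [min_eq_left hjk, max_eq_right hjk, abs_of_nonpos (by linarith : (j:ℝ) - (k:ℝ) ≤ 0)]
      ring_nf
      linarith
    · have hjk : (k:ℝ) ≤ (j:ℝ) := by exact_mod_cast h
      rw [min_eq_right hjk, max_eq_left hjk, abs_of_nonneg (by linarith : (0:ℝ) ≤ (j:ℝ) - (k:ℝ))]
      ring_nf
      linarith
  have h5 : ((2:ℝ)^(-(j:ℝ)/3) * (2:ℝ)^(-(k:ℝ)/3))^2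
      * ((2:ℝ)^((min j k : ℝ)+2) * ((2:ℝ)^(9:ℝ) * (2:ℝ)^((max j k : ℝ)/3)))
      ≤ (2:ℝ)^(12:ℝ) * (2:ℝ)^(-(|(j:ℝ) - (k:ℝ)|)/3) := by
    rw [hcollect, ← Real.rpow_add (by norm_num : (0:ℝ) < 2)]
    exact Real.rpow_le_rpow_of_exponent_le (by norm_num) hexp
  calc ∑ p ∈ S, (ff a b SA p)^2
      ≤ ((2:ℝ)^(-(j:ℝ)/3) * (2:ℝ)^(-(k:ℝ)/3))^2
        * ((2:ℝ)^((min j k : ℝ)+2) * ((2:ℝ)^(9:ℝ) * (2:ℝ)^((max j k : ℝ)/3))) * (XA * Y) := by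
        calc ∑ p ∈ S, (ff a b SA p)^2 ≤ _ := h4
          _ = _ := by ring
    _ ≤ ((2:ℝ)^(12:ℝ) * (2:ℝ)^(-(|(j:ℝ) - (k:ℝ)|)/3)) * (XA * Y) := by
        apply mul_le_mul_of_nonneg_right h5 (by positivity)
    _ = _ := by ring

def piece (A : ℤ×ℤ → ℝ) (j : ℕ) (q : ℤ×ℤ) : ℝ := if lev q = j then A q else 0

lemma piece_nonneg (A : ℤ×ℤ → ℝ) (hA : ∀ q, 0 ≤ A q) (j : ℕ) (q : ℤ×ℤ) :
    0 ≤ piece A j q := by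
  unfold piece; split_ifs
  · exact hA q
  · exact le_refl 0

lemma piece_ne (A : ℤ×ℤ → ℝ) (j : ℕ) (q : ℤ×ℤ) (h : piece A j q ≠ 0) :
    A q ≠ 0 ∧ lev q = j := by
  unfold piece at h
  split_ifs at h with hc
  · exact ⟨h, hc⟩
  · exact absurd rfl h

lemma sq_piece_sum (A : ℤ×ℤ → ℝ) (SA : Finset (ℤ×ℤ)) (J : ℕ)
    (hJ : ∀ q ∈ SA, lev q < J) :
    ∑ j ∈ Finset.range J, ∑ q ∈ SA, (piece A j q)^2 = ∑ q ∈ SA, (A q)^2 := by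
  classical
  rw [Finset.sum_comm]
  apply Finset.sum_congr rfl
  intro q hq
  have h1 : ∀ j, (piece A j q)^2 = if lev q = j then (A q)^2 else 0 := by
    intro j
    unfold piece
    split_ifs <;> simp
  calc ∑ j ∈ Finset.range J, (piece A j q)^2
      = ∑ j ∈ Finset.range J, if lev q = j then (A q)^2 else 0 := by
        apply Finset.sum_congr rfl; intro j _; exact h1 j
    _ = (A q)^2 := by
        rw [Finset.sum_ite_eq]
        exact if_pos (Finset.mem_range.2 (hJ q hq))

lemma piece_sum_eq (A : ℤ×ℤ → ℝ) (J : ℕ) (q : ℤ×ℤ) (h : A q ≠ 0 → lev q < J) :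
    A q = ∑ j ∈ Finset.range J, piece A j q := by
  classical
  rcases eq_or_ne (A q) 0 with h0 | h0
  · rw [h0]
    symm
    apply Finset.sum_eq_zero
    intro j _
    unfold piece
    split_ifs <;> simp [h0]
  · unfold piece
    rw [Finset.sum_ite_eq]
    rw [if_pos (Finset.mem_range.2 (h h0))]

lemma ff_decomp (A B : ℤ×ℤ → ℝ) (SA : Finset (ℤ×ℤ)) (J K : ℕ)
    (hJ : ∀ q, A q ≠ 0 → lev q < J) (hK : ∀ r, B r ≠ 0 → lev r < K) (p : ℤ×ℤ) :
    ff A B SA p = ∑ j ∈ Finset.range J, ∑ k ∈ Finset.range K,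
      ff (piece A j) (piece B k) SA p := by
  classical
  unfold ff
  have hterm : ∀ q ∈ SA,
      A q * B (p - q) * (jap (sig q))^(-(1/3) : ℝ) * (jap (sig (p - q)))^(-(1/3) : ℝ)
      = ∑ j ∈ Finset.range J, ∑ k ∈ Finset.range K,
          piece A j q * piece B k (p - q) * (jap (sig q))^(-(1/3) : ℝ)
            * (jap (sig (p - q)))^(-(1/3) : ℝ) := by
    intro q _
    rw [piece_sum_eq A J q (hJ q), piece_sum_eq B K (p - q) (hK (p - q))]
    rw [Finset.sum_mul, Finset.sum_mul, Finset.sum_mul]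
    apply Finset.sum_congr rfl
    intro j _
    rw [Finset.mul_sum, Finset.sum_mul, Finset.sum_mul]
  calc ∑ q ∈ SA, A q * B (p - q) * (jap (sig q))^(-(1/3) : ℝ) * (jap (sig (p - q)))^(-(1/3) : ℝ)
      = ∑ q ∈ SA, ∑ j ∈ Finset.range J, ∑ k ∈ Finset.range K,
          piece A j q * piece B k (p - q) * (jap (sig q))^(-(1/3) : ℝ)
            * (jap (sig (p - q)))^(-(1/3) : ℝ) := Finset.sum_congr rfl hterm
    _ = ∑ j ∈ Finset.range J, ∑ q ∈ SA, ∑ k ∈ Finset.range K,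
          piece A j q * piece B k (p - q) * (jap (sig q))^(-(1/3) : ℝ)
            * (jap (sig (p - q)))^(-(1/3) : ℝ) := Finset.sum_comm
    _ = ∑ j ∈ Finset.range J, ∑ k ∈ Finset.range K, ∑ q ∈ SA,
          piece A j q * piece B k (p - q) * (jap (sig q))^(-(1/3) : ℝ)
            * (jap (sig (p - q)))^(-(1/3) : ℝ) := by
        apply Finset.sum_congr rfl
        intro j _
        exact Finset.sum_comm

lemma master (A B : ℤ×ℤ → ℝ) (SA SB : Finset (ℤ×ℤ))
    (hA0 : ∀ q, 0 ≤ A q) (hB0 : ∀ q, 0 ≤ B q)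
    (hAS : ∀ q, A q ≠ 0 → q ∈ SA) (hBS : ∀ q, B q ≠ 0 → q ∈ SB)
    (S : Finset (ℤ×ℤ)) :
    Real.sqrt (∑ p ∈ S, (ff A B SA p)^2)
      ≤ 1280 * Real.sqrt (∑ q ∈ SA, (A q)^2) * Real.sqrt (∑ q₂ ∈ SB, (B q₂)^2) := by
  classical
  set J := (SA.sup lev) + 1 with hJdef
  set K := (SB.sup lev) + 1 with hKdef
  have hJ : ∀ q, A q ≠ 0 → lev q < J :=
    fun q hq => lt_of_le_of_lt (Finset.le_sup (hAS q hq)) (lt_add_one _)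
  have hK : ∀ r, B r ≠ 0 → lev r < K :=
    fun r hr => lt_of_le_of_lt (Finset.le_sup (hBS r hr)) (lt_add_one _)
  set T := (Finset.range J) ×ˢ (Finset.range K) with hT
  have hd : ∀ p, ff A B SA p = ∑ jk ∈ T, ff (piece A jk.1) (piece B jk.2) SA p := by
    intro p
    rw [ff_decomp A B SA J K hJ hK p, hT, Finset.sum_product]
  have hmink : Real.sqrt (∑ p ∈ S, (ff A B SA p)^2)
      ≤ ∑ jk ∈ T, Real.sqrt (∑ p ∈ S, (ff (piece A jk.1) (piece B jk.2) SA p)^2) := by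
    have : ∑ p ∈ S, (ff A B SA p)^2
        = ∑ p ∈ S, (∑ jk ∈ T, ff (piece A jk.1) (piece B jk.2) SA p)^2 := by
      apply Finset.sum_congr rfl
      intro p _
      rw [hd p]
    rw [this]
    exact minkowski T S (fun jk p => ff (piece A jk.1) (piece B jk.2) SA p)
  set x : ℕ → ℝ := fun j => Real.sqrt (∑ q ∈ SA, (piece A j q)^2) with hx
  set y : ℕ → ℝ := fun k => Real.sqrt (∑ q₂ ∈ SB, (piece B k q₂)^2) with hy
  have hpiece : ∀ jk ∈ T, Real.sqrt (∑ p ∈ S, (ff (piece A jk.1) (piece B jk.2) SA p)^2)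
      ≤ (2:ℝ)^(6:ℝ) * ((2:ℝ)^(-(|(jk.1:ℝ) - (jk.2:ℝ)|)/6) * x jk.1 * y jk.2) := by
    intro jk _
    have hcf := core_f (a := piece A jk.1) (b := piece B jk.2) (SA := SA) (SB := SB)
      (j := jk.1) (k := jk.2)
      (piece_nonneg A hA0 jk.1) (piece_nonneg B hB0 jk.2)
      (fun r hr => hBS r (piece_ne B jk.2 r hr).1)
      (fun q hq => (piece_ne A jk.1 q hq).2)
      (fun q hq => (piece_ne B jk.2 q hq).2) S
    have hs := Real.sqrt_le_sqrt hcf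
    calc Real.sqrt (∑ p ∈ S, (ff (piece A jk.1) (piece B jk.2) SA p)^2) ≤ _ := hs
      _ = (2:ℝ)^(6:ℝ) * ((2:ℝ)^(-(|(jk.1:ℝ) - (jk.2:ℝ)|)/6) * x jk.1 * y jk.2) := by
          rw [Real.sqrt_mul (by positivity), Real.sqrt_mul (by positivity),
            Real.sqrt_mul (by positivity)]
          rw [sqrt_rpow_two, sqrt_rpow_two]
          rw [show (12:ℝ)/2 = (6:ℝ) by norm_num,
            show (-(|(jk.1:ℝ) - (jk.2:ℝ)|)/3)/2 = -(|(jk.1:ℝ) - (jk.2:ℝ)|)/6 by ring]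
          rw [hx, hy]
          ring
  have hsum2 : ∑ jk ∈ T, (2:ℝ)^(6:ℝ) * ((2:ℝ)^(-(|(jk.1:ℝ) - (jk.2:ℝ)|)/6) * x jk.1 * y jk.2)
      = (2:ℝ)^(6:ℝ) * ∑ j ∈ Finset.range J, ∑ k ∈ Finset.range K,
          (2:ℝ)^(-(|(j:ℝ) - (k:ℝ)|)/6) * x j * y k := by
    rw [hT, Finset.sum_product, Finset.mul_sum]
    apply Finset.sum_congr rfl
    intro j _
    rw [Finset.mul_sum]
  have hx0 : ∀ j, 0 ≤ x j := fun j => Real.sqrt_nonneg _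
  have hy0 : ∀ k, 0 ≤ y k := fun k => Real.sqrt_nonneg _
  have hschur := schur J K x y hx0 hy0
  have hxsq : ∑ j ∈ Finset.range J, (x j)^2 = ∑ q ∈ SA, (A q)^2 := by
    rw [← sq_piece_sum A SA J (fun q hq => by
      rcases eq_or_ne (A q) 0 with h0 | h0
      · exact lt_of_le_of_lt (Finset.le_sup hq) (lt_add_one _)
      · exact hJ q h0)]
    apply Finset.sum_congr rfl
    intro j _
    rw [hx]
    exact Real.sq_sqrt (Finset.sum_nonneg fun q _ => sq_nonneg _)
  have hysq : ∑ k ∈ Finset.range K, (y k)^2 = ∑ q₂ ∈ SB, (B q₂)^2 := by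
    rw [← sq_piece_sum B SB K (fun q hq => by
      rcases eq_or_ne (B q) 0 with h0 | h0
      · exact lt_of_le_of_lt (Finset.le_sup hq) (lt_add_one _)
      · exact hK q h0)]
    apply Finset.sum_congr rfl
    intro k _
    rw [hy]
    exact Real.sq_sqrt (Finset.sum_nonneg fun q _ => sq_nonneg _)
  have h64 : (2:ℝ)^(6:ℝ) = 64 := by
    rw [show (6:ℝ) = ((6:ℕ):ℝ) by norm_num, Real.rpow_natCast]
    norm_num
  calc Real.sqrt (∑ p ∈ S, (ff A B SA p)^2)
      ≤ ∑ jk ∈ T, Real.sqrt (∑ p ∈ S, (ff (piece A jk.1) (piece B jk.2) SA p)^2) := hmink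
    _ ≤ ∑ jk ∈ T, (2:ℝ)^(6:ℝ) * ((2:ℝ)^(-(|(jk.1:ℝ) - (jk.2:ℝ)|)/6) * x jk.1 * y jk.2) :=
        Finset.sum_le_sum hpiece
    _ = (2:ℝ)^(6:ℝ) * ∑ j ∈ Finset.range J, ∑ k ∈ Finset.range K,
          (2:ℝ)^(-(|(j:ℝ) - (k:ℝ)|)/6) * x j * y k := hsum2
    _ ≤ (2:ℝ)^(6:ℝ) * (20 * Real.sqrt (∑ j ∈ Finset.range J, (x j)^2)
          * Real.sqrt (∑ k ∈ Finset.range K, (y k)^2)) := by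
        apply mul_le_mul_of_nonneg_left hschur (by positivity)
    _ = 1280 * Real.sqrt (∑ q ∈ SA, (A q)^2) * Real.sqrt (∑ q₂ ∈ SB, (B q₂)^2) := by
        rw [hxsq, hysq, h64]
        ring

end Core

end S16

namespace S16

lemma cmul_apply (u₁ u₂ : TrigPoly) (p : ℤ × ℤ) :
    cmul u₁ u₂ p = ∑ q ∈ u₁.support, u₁ q * u₂ (p - q) := by
  classical
  unfold cmul
  rw [Finsupp.sum, Finsupp.finset_sum_apply]
  apply Finset.sum_congr rfl
  intro a _
  rw [Finsupp.sum, Finsupp.finset_sum_apply]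
  have h1 : ∀ b ∈ u₂.support, (Finsupp.single (a + b) (u₁ a * u₂ b)) p
      = if b = p - a then u₁ a * u₂ b else 0 := by
    intro b _
    rw [Finsupp.single_apply]
    by_cases hb : a + b = p
    · rw [if_pos hb, if_pos (by rw [← hb]; abel)]
    · rw [if_neg hb, if_neg (fun h => hb (by rw [h]; abel))]
  rw [Finset.sum_congr rfl h1, Finset.sum_ite_eq']
  by_cases hmem : p - a ∈ u₂.support
  · rw [if_pos hmem]
  · rw [if_neg hmem, Finsupp.notMem_support_iff.1 hmem, mul_zero]

end S16

open S16 in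
theorem stmt16 :
    ∀ s : ℝ, 0 ≤ s → ∃ C : ℝ, 0 < C ∧
      ∀ u₁ u₂ : TrigPoly,
        Xnorm s 0 (cmul u₁ u₂) ≤ C * Xnorm s (1 / 3) u₁ * Xnorm s (1 / 3) u₂ := by
  intro s hs
  refine ⟨1280, by norm_num, ?_⟩
  intro u₁ u₂
  classical
  set A : ℤ×ℤ → ℝ := fun q => jap q.1 ^ s * jap (q.2 - P q.1) ^ ((1:ℝ)/3) * ‖u₁ q‖ with hA
  set B : ℤ×ℤ → ℝ := fun q => jap q.1 ^ s * jap (q.2 - P q.1) ^ ((1:ℝ)/3) * ‖u₂ q‖ with hB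
  have hA0 : ∀ q, 0 ≤ A q := by
    intro q
    simp only [hA]
    have h1 : (0:ℝ) ≤ jap q.1 ^ s := Real.rpow_nonneg (jap_pos _).le _
    have h2 : (0:ℝ) ≤ jap (q.2 - P q.1) ^ ((1:ℝ)/3) := Real.rpow_nonneg (jap_pos _).le _
    positivity
  have hB0 : ∀ q, 0 ≤ B q := by
    intro q
    simp only [hB]
    have h1 : (0:ℝ) ≤ jap q.1 ^ s := Real.rpow_nonneg (jap_pos _).le _
    have h2 : (0:ℝ) ≤ jap (q.2 - P q.1) ^ ((1:ℝ)/3) := Real.rpow_nonneg (jap_pos _).le _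
    positivity
  have hAS : ∀ q, A q ≠ 0 → q ∈ u₁.support := by
    intro q h
    rw [Finsupp.mem_support_iff]
    intro h0
    apply h
    simp only [hA, h0]
    simp
  have hBS : ∀ q, B q ≠ 0 → q ∈ u₂.support := by
    intro q h
    rw [Finsupp.mem_support_iff]
    intro h0
    apply h
    simp only [hB, h0]
    simp
  have rpow_sq : ∀ (x : ℝ), 0 ≤ x → ∀ (t : ℝ), (x ^ t)^2 = x ^ (2*t) := by
    intro x hx t
    rw [← Real.rpow_natCast (x^t) 2, ← Real.rpow_mul hx]
    congr 1
    push_cast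
    ring
  have hXnorm1 : Xnorm s (1/3) u₁ = Real.sqrt (∑ q ∈ u₁.support, (A q)^2) := by
    unfold Xnorm
    rw [← Real.sqrt_eq_rpow]
    congr 1
    apply Finset.sum_congr rfl
    intro q _
    simp only [hA]
    rw [mul_pow, mul_pow, rpow_sq _ (jap_pos _).le, rpow_sq _ (jap_pos _).le]
  have hXnorm2 : Xnorm s (1/3) u₂ = Real.sqrt (∑ q ∈ u₂.support, (B q)^2) := by
    unfold Xnorm
    rw [← Real.sqrt_eq_rpow]
    congr 1
    apply Finset.sum_congr rfl
    intro q _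
    simp only [hB]
    rw [mul_pow, mul_pow, rpow_sq _ (jap_pos _).le, rpow_sq _ (jap_pos _).le]
  have hcanc : ∀ r : ℤ×ℤ, jap (r.2 - P r.1) ^ ((1:ℝ)/3) * jap (sig r) ^ (-(1/3):ℝ) = 1 := by
    intro r
    have hsg : sig r = r.2 - P r.1 := rfl
    rw [hsg, ← Real.rpow_add (jap_pos _)]
    rw [show ((1:ℝ)/3 + -(1/3)) = 0 by ring, Real.rpow_zero]
  have hmain : Xnorm s 0 (cmul u₁ u₂)
      ≤ Real.sqrt (∑ p ∈ (cmul u₁ u₂).support, (ff A B u₁.support p)^2) := by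
    unfold Xnorm
    rw [← Real.sqrt_eq_rpow]
    apply Real.sqrt_le_sqrt
    apply Finset.sum_le_sum
    intro p _
    rw [show (2*(0:ℝ)) = 0 by ring, Real.rpow_zero, mul_one]
    have hle : jap p.1 ^ s * ‖(cmul u₁ u₂) p‖ ≤ ff A B u₁.support p := by
      have hstep1 : ‖(cmul u₁ u₂) p‖ ≤ ∑ q ∈ u₁.support, ‖u₁ q‖ * ‖u₂ (p - q)‖ := by
        rw [cmul_apply]
        calc ‖∑ q ∈ u₁.support, u₁ q * u₂ (p - q)‖
            ≤ ∑ q ∈ u₁.support, ‖u₁ q * u₂ (p - q)‖ := norm_sum_le _ _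
          _ = ∑ q ∈ u₁.support, ‖u₁ q‖ * ‖u₂ (p - q)‖ :=
              Finset.sum_congr rfl fun q _ => norm_mul _ _
      have hterm : ∀ q ∈ u₁.support,
          jap p.1 ^ s * (‖u₁ q‖ * ‖u₂ (p - q)‖)
            ≤ A q * B (p - q) * (jap (sig q))^(-(1/3):ℝ) * (jap (sig (p - q)))^(-(1/3):ℝ) := by
        intro q _
        have hjap : jap p.1 ^ s ≤ jap q.1 ^ s * jap (p.1 - q.1) ^ s := by
          have hadd := jap_add_le q.1 (p.1 - q.1)
          rw [show q.1 + (p.1 - q.1) = p.1 by ring] at hadd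
          calc jap p.1 ^ s ≤ (jap q.1 * jap (p.1 - q.1))^s :=
                Real.rpow_le_rpow (jap_pos _).le hadd hs
            _ = jap q.1 ^ s * jap (p.1 - q.1) ^ s :=
                Real.mul_rpow (jap_pos _).le (jap_pos _).le
        have heq : A q * B (p - q) * (jap (sig q))^(-(1/3):ℝ) * (jap (sig (p - q)))^(-(1/3):ℝ)
            = (jap q.1 ^ s * ‖u₁ q‖) * (jap (p.1 - q.1) ^ s * ‖u₂ (p - q)‖) := by
          simp only [hA, hB]
          have h1 := hcanc q
          have h2 := hcanc (p - q)
          have hfst : (p - q).1 = p.1 - q.1 := rfl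
          calc (jap q.1 ^ s * jap (q.2 - P q.1) ^ ((1:ℝ)/3) * ‖u₁ q‖)
                * (jap (p-q).1 ^ s * jap ((p-q).2 - P (p-q).1) ^ ((1:ℝ)/3) * ‖u₂ (p-q)‖)
                * (jap (sig q))^(-(1/3):ℝ) * (jap (sig (p - q)))^(-(1/3):ℝ)
              = ((jap q.1 ^ s * ‖u₁ q‖) * (jap (p-q).1 ^ s * ‖u₂ (p-q)‖))
                * ((jap (q.2 - P q.1) ^ ((1:ℝ)/3) * (jap (sig q))^(-(1/3):ℝ))
                  * (jap ((p-q).2 - P (p-q).1) ^ ((1:ℝ)/3) * (jap (sig (p-q)))^(-(1/3):ℝ))) := by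
                ring
            _ = (jap q.1 ^ s * ‖u₁ q‖) * (jap (p.1 - q.1) ^ s * ‖u₂ (p - q)‖) := by
                rw [h1, h2, hfst]
                ring
        rw [heq]
        have hz : (0:ℝ) ≤ ‖u₁ q‖ * ‖u₂ (p - q)‖ := by positivity
        calc jap p.1 ^ s * (‖u₁ q‖ * ‖u₂ (p - q)‖)
            ≤ (jap q.1 ^ s * jap (p.1 - q.1) ^ s) * (‖u₁ q‖ * ‖u₂ (p - q)‖) :=
              mul_le_mul_of_nonneg_right hjap hz
          _ = (jap q.1 ^ s * ‖u₁ q‖) * (jap (p.1 - q.1) ^ s * ‖u₂ (p - q)‖) := by ring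
      calc jap p.1 ^ s * ‖(cmul u₁ u₂) p‖
          ≤ jap p.1 ^ s * ∑ q ∈ u₁.support, ‖u₁ q‖ * ‖u₂ (p - q)‖ :=
            mul_le_mul_of_nonneg_left hstep1 (Real.rpow_nonneg (jap_pos _).le _)
        _ = ∑ q ∈ u₁.support, jap p.1 ^ s * (‖u₁ q‖ * ‖u₂ (p - q)‖) := Finset.mul_sum _ _ _
        _ ≤ ∑ q ∈ u₁.support,
              A q * B (p - q) * (jap (sig q))^(-(1/3):ℝ) * (jap (sig (p - q)))^(-(1/3):ℝ) :=
            Finset.sum_le_sum hterm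
        _ = ff A B u₁.support p := rfl
    have h0 : 0 ≤ jap p.1 ^ s * ‖(cmul u₁ u₂) p‖ := by
      have := Real.rpow_nonneg (jap_pos p.1).le s
      positivity
    calc jap p.1 ^ (2*s) * ‖(cmul u₁ u₂) p‖^2
        = (jap p.1 ^ s * ‖(cmul u₁ u₂) p‖)^2 := by
          rw [mul_pow, rpow_sq _ (jap_pos _).le]
      _ ≤ (ff A B u₁.support p)^2 := pow_le_pow_left₀ h0 hle 2
  have hM := master A B u₁.support u₂.support hA0 hB0 hAS hBS (cmul u₁ u₂).support
  calc Xnorm s 0 (cmul u₁ u₂)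
      ≤ Real.sqrt (∑ p ∈ (cmul u₁ u₂).support, (ff A B u₁.support p)^2) := hmain
    _ ≤ 1280 * Real.sqrt (∑ q ∈ u₁.support, (A q)^2)
          * Real.sqrt (∑ q₂ ∈ u₂.support, (B q₂)^2) := hM
    _ = 1280 * Xnorm s (1/3) u₁ * Xnorm s (1/3) u₂ := by rw [hXnorm1, hXnorm2]
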